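/- arXiv:alg-geom/9704014 — 2 statements merged into one kernel-verified Lean document; each statement's English description precedes it below -/
import Mathlib

section
/- There exists a family of polynomials g(P,F) ∈ ℤ[q], one for each pair consisting of a convex polytope P and a face F of P, such that for every convex polytope P and every face F of P one has Σ_{F ≤ E ≤ P} g(E,F)·g(P/E) = g(P), where the sum runs over all faces E of P with F ≤ E ≤ P (with the convention g(P/P) = 1). -/
open Polynomial
open scoped Classical

noncomputable section

/-- `P ⊆ ℝ^d` is a (convex) polytope: the convex hull of a finite set of points. -/
def IsPolytope {d : ℕ} (P : Set (Fin d → ℝ)) : Prop :=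
  ∃ S : Finset (Fin d → ℝ), P = convexHull ℝ (S : Set (Fin d → ℝ))

/-- `F` is a face of `P`: the empty set, `P` itself, or the intersection of `P`
with a supporting hyperplane. -/
def IsFace {d : ℕ} (P F : Set (Fin d → ℝ)) : Prop :=
  F = ∅ ∨ F = P ∨ ∃ (f : (Fin d → ℝ) →ₗ[ℝ] ℝ) (c : ℝ),
    (∀ x ∈ P, f x ≤ c) ∧ F = {x ∈ P | f x = c}

/-- Affine dimension of a subset of `ℝ^d`, with `pdim ∅ = -1`. -/
def pdim {d : ℕ} (P : Set (Fin d → ℝ)) : ℤ :=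
  if P = ∅ then -1 else (Module.finrank ℝ (affineSpan ℝ P).direction : ℤ)

/-- The pair of functions `g`, `h` satisfies the defining recursion of the
`g`- and `h`-polynomials of polytopes. -/
def IsGH {d : ℕ} (g h : Set (Fin d → ℝ) → Polynomial ℤ) : Prop :=
  g ∅ = 1 ∧
  (∀ P : Set (Fin d → ℝ), IsPolytope P →
      h P = ∑ᶠ F ∈ {F : Set (Fin d → ℝ) | IsFace P F ∧ F ≠ P},
        (X - 1 : Polynomial ℤ) ^ (pdim P - pdim F - 1).toNat * g F) ∧
  (∀ P : Set (Fin d → ℝ), IsPolytope P → P ≠ ∅ →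
      (g P).coeff 0 = (h P).coeff 0 ∧
      (∀ i : ℕ, 0 < i → 2 * (i : ℤ) ≤ pdim P →
        (g P).coeff i = (h P).coeff i - (h P).coeff (i - 1)) ∧
      (∀ i : ℕ, 0 < i → ¬(2 * (i : ℤ) ≤ pdim P) → (g P).coeff i = 0))

/-- `Q` is (a combinatorial model of) the quotient polytope `P/E`, with `ψ` an
explicit isomorphism from the interval `[E, P]` in the face poset of `P` to the
face poset of `Q`. -/
def IsQuotientPair {d : ℕ} (P E Q : Set (Fin d → ℝ))
    (ψ : Set (Fin d → ℝ) → Set (Fin d → ℝ)) : Prop :=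
  IsPolytope Q ∧
  Set.BijOn ψ {G : Set (Fin d → ℝ) | IsFace P G ∧ E ⊆ G} {G : Set (Fin d → ℝ) | IsFace Q G} ∧
  ∀ G₁ ∈ {G : Set (Fin d → ℝ) | IsFace P G ∧ E ⊆ G},
    ∀ G₂ ∈ {G : Set (Fin d → ℝ) | IsFace P G ∧ E ⊆ G}, (G₁ ⊆ G₂ ↔ ψ G₁ ⊆ ψ G₂)

/-- The family `gr` of relative `g`-polynomials satisfies the defining relation
`∑_{F ≤ E ≤ P} g(E,F) g(P/E) = g(P)` (where `g(P/P) = 1`, the quotient by `P`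
itself being the empty polytope). -/
def IsRelG {d : ℕ} (g : Set (Fin d → ℝ) → Polynomial ℤ)
    (gr : Set (Fin d → ℝ) → Set (Fin d → ℝ) → Polynomial ℤ) : Prop :=
  ∀ (P F : Set (Fin d → ℝ)) (Q : Set (Fin d → ℝ) → Set (Fin d → ℝ))
    (ψ : Set (Fin d → ℝ) → Set (Fin d → ℝ) → Set (Fin d → ℝ)),
    IsPolytope P → IsFace P F →
    (∀ E, IsFace P E → F ⊆ E → IsQuotientPair P E (Q E) (ψ E)) →
    (∑ᶠ E ∈ {E : Set (Fin d → ℝ) | IsFace P E ∧ F ⊆ E}, gr E F * g (Q E)) = g P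

/-- A rational polytope: the convex hull of finitely many points with rational
coordinates. -/
def IsRationalPolytope {d : ℕ} (P : Set (Fin d → ℝ)) : Prop :=
  ∃ S : Finset (Fin d → ℝ), (∀ v ∈ S, ∀ i : Fin d, ∃ q : ℚ, v i = (q : ℝ)) ∧
    P = convexHull ℝ (S : Set (Fin d → ℝ))


/-! ### Auxiliary development -/

section Aux
open Set Pointwise

variable {d : ℕ}

abbrev V (d : ℕ) := Fin d → ℝ

/-- linear functional bounded on `S` is bounded on the hull. -/
lemma hull_le {S : Finset (V d)} {f : V d →ₗ[ℝ] ℝ} {c : ℝ}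
    (h : ∀ s ∈ S, f s ≤ c) : ∀ x ∈ convexHull ℝ (S : Set (V d)), f x ≤ c := by
  intro x hx
  have : convexHull ℝ (S : Set (V d)) ⊆ {x | f x ≤ c} :=
    convexHull_min (fun s hs => h s hs) (convex_halfSpace_le (LinearMap.isLinear f) c)
  exact this hx

/-- Workhorse: the face cut out by `f = c` is the hull of the vertices on the hyperplane. -/
lemma face_eq_hull_filter {S : Finset (V d)} {f : V d →ₗ[ℝ] ℝ} {c : ℝ}
    (h : ∀ s ∈ S, f s ≤ c) :
    {x ∈ convexHull ℝ (S : Set (V d)) | f x = c}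
      = convexHull ℝ ((S.filter (fun s => f s = c) : Finset (V d)) : Set (V d)) := by
  apply Set.Subset.antisymm
  · rintro x ⟨hx, hfx⟩
    obtain ⟨w, hw0, hw1, hwx⟩ := Finset.mem_convexHull'.1 hx
    have key : ∀ y ∈ S, w y ≠ 0 → f y = c := by
      intro y hy hwy
      by_contra hne
      have hylt : f y < c := lt_of_le_of_ne (h y hy) hne
      have hwy' : 0 < w y := lt_of_le_of_ne (hw0 y hy) (Ne.symm hwy)
      have hsum : ∑ z ∈ S, w z * f z = c := by
        have := congrArg f hwx
        simpa [map_sum, map_smul, smul_eq_mul, hfx] using this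
      have hlt : ∑ z ∈ S, w z * f z < ∑ z ∈ S, w z * c := by
        apply Finset.sum_lt_sum
        · intro z hz; exact mul_le_mul_of_nonneg_left (h z hz) (hw0 z hz)
        · exact ⟨y, hy, by nlinarith⟩
      rw [hsum, ← Finset.sum_mul, hw1, one_mul] at hlt
      exact lt_irrefl _ hlt
    apply Finset.mem_convexHull'.2
    refine ⟨w, fun y hy => hw0 y (Finset.mem_filter.1 hy).1, ?_, ?_⟩
    · rw [← hw1]
      exact Finset.sum_filter_of_ne (fun y hy hne => key y hy hne)
    · rw [← hwx]
      refine Finset.sum_filter_of_ne (fun y hy hne => ?_)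
      by_cases h0 : w y = 0
      · exact absurd (by simp [h0]) hne
      · exact key y hy h0
  · intro x hx
    constructor
    · exact convexHull_mono (by exact_mod_cast Finset.filter_subset _ S) hx
    · have h1 : convexHull ℝ ((S.filter (fun s => f s = c) : Finset (V d)) : Set (V d))
          ⊆ {x | f x = c} := by
        apply convexHull_min
        · intro s hs
          simp only [Finset.coe_filter, Set.mem_setOf_eq] at hs
          exact hs.2
        · exact convex_hyperplane (LinearMap.isLinear f) c
      exact h1 hx


section Faces
variable {P F G : Set (V d)}

lemma isFace_self : IsFace P P := Or.inr (Or.inl rfl)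

lemma isFace_empty : IsFace P (∅ : Set (V d)) := Or.inl rfl

lemma IsFace.subset (h : IsFace P F) : F ⊆ P := by
  rcases h with rfl | rfl | ⟨f, c, hf, rfl⟩
  · exact Set.empty_subset _
  · exact subset_rfl
  · exact fun x hx => hx.1

/-- Every face other than `P` itself is exposed. -/
lemma IsFace.exposed (h : IsFace P F) (hne : F ≠ P) :
    ∃ (f : V d →ₗ[ℝ] ℝ) (c : ℝ), (∀ x ∈ P, f x ≤ c) ∧ F = {x ∈ P | f x = c} := by
  rcases h with rfl | rfl | h
  · exact ⟨0, 1, fun x _ => by norm_num, by ext x; simp⟩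
  · exact absurd rfl hne
  · exact h

/-- A face of `P = conv S` is the hull of its members in `S`. -/
lemma IsFace.eq_hull (hS : P = convexHull ℝ ((S : Finset (V d)) : Set (V d)))
    (h : IsFace P F) : F = convexHull ℝ ((S.filter (fun s => s ∈ F) : Finset (V d)) : Set (V d)) := by
  by_cases hne : F = P
  · subst hne
    have : S.filter (fun s => s ∈ F) = S := by
      apply Finset.filter_true_of_mem
      intro s hs
      rw [hS]; exact subset_convexHull ℝ _ hs
    rw [this, ← hS]
  · obtain ⟨f, c, hf, hFeq⟩ := h.exposed hne
    subst hS
    have hfS : ∀ s ∈ S, f s ≤ c := fun s hs => hf s (subset_convexHull ℝ _ hs)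
    have h1 : F = convexHull ℝ ((S.filter (fun s => f s = c) : Finset (V d)) : Set (V d)) := by
      rw [hFeq]; exact face_eq_hull_filter hfS
    have h2 : S.filter (fun s => f s = c) = S.filter (fun s => s ∈ F) := by
      apply Finset.filter_congr
      intro s hs
      have hsP : s ∈ convexHull ℝ ((S : Finset (V d)) : Set (V d)) := subset_convexHull ℝ _ hs
      simp only [hFeq, Set.mem_setOf_eq, eq_iff_iff]
      exact ⟨fun hc => ⟨hsP, hc⟩, fun hc => hc.2⟩
    rwa [h2] at h1

lemma IsFace.polytope (hP : IsPolytope P) (h : IsFace P F) : IsPolytope F := by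
  obtain ⟨S, rfl⟩ := hP
  exact ⟨_, h.eq_hull rfl⟩

lemma faces_finite (hP : IsPolytope P) : {F : Set (V d) | IsFace P F}.Finite := by
  obtain ⟨S, rfl⟩ := hP
  apply Set.Finite.subset ((S.powerset.finite_toSet).image
    (fun (T : Finset (V d)) => convexHull ℝ (T : Set (V d))))
  intro F hF
  refine ⟨S.filter (fun s => s ∈ F), ?_, (hF.eq_hull rfl).symm⟩
  exact Finset.mem_powerset.2 (Finset.filter_subset _ _)

/-- A face of `P` contained in a face `F` is a face of `F`. -/
lemma IsFace.of_subset (hG : IsFace P G) (hF : IsFace P F) (hGF : G ⊆ F) : IsFace F G := by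
  by_cases hne : G = F
  · exact hne ▸ isFace_self
  rcases hG with rfl | rfl | ⟨f, c, hf, rfl⟩
  · exact isFace_empty
  · exact absurd (Set.Subset.antisymm hF.subset hGF).symm hne
  · refine Or.inr (Or.inr ⟨f, c, fun x hx => hf x (hF.subset hx), ?_⟩)
    apply Set.Subset.antisymm
    · intro x hx; exact ⟨hGF hx, hx.2⟩
    · intro x hx; exact ⟨hF.subset hx.1, hx.2⟩

/-- A face of a face is a face. -/
lemma IsFace.trans (hP : IsPolytope P) (hF : IsFace P F) (hG : IsFace F G) : IsFace P G := by
  by_cases hGF : G = F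
  · exact hGF ▸ hF
  obtain ⟨f', c', hf', hGeq⟩ := hG.exposed hGF
  by_cases hFP : F = P
  · subst hFP; exact Or.inr (Or.inr ⟨f', c', hf', hGeq⟩)
  obtain ⟨f, c, hf, hFeq⟩ := hF.exposed hFP
  obtain ⟨S, rfl⟩ := hP
  set P := convexHull ℝ ((S : Finset (V d)) : Set (V d)) with hPdef
  have hSP : ∀ s ∈ S, s ∈ P := fun s hs => subset_convexHull ℝ _ hs
  by_cases hB : (S.filter (fun s => s ∉ F)).Nonempty
  · set B := S.filter (fun s => s ∉ F) with hBdef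
    set M := B.sup' hB (fun s => (f' s - c') / (c - f s)) + 1 with hMdef
    have hcpos : ∀ s ∈ B, 0 < c - f s := by
      intro s hs
      rw [hBdef, Finset.mem_filter] at hs
      have h1 : f s ≤ c := hf s (hSP s hs.1)
      rcases lt_or_eq_of_le h1 with h2 | h2
      · linarith
      · exact absurd (hFeq ▸ ⟨hSP s hs.1, h2⟩) hs.2
    have key : ∀ s ∈ B, f' s + M * f s < c' + M * c := by
      intro s hs
      have h1 : (f' s - c') / (c - f s) ≤ B.sup' hB (fun s => (f' s - c') / (c - f s)) :=
        Finset.le_sup' (fun s => (f' s - c') / (c - f s)) hs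
      have h2 : (f' s - c') / (c - f s) < M := by rw [hMdef]; linarith
      have h3 := (div_lt_iff₀ (hcpos s hs)).1 h2
      nlinarith [hcpos s hs]
    set φ : V d →ₗ[ℝ] ℝ := f' + M • f with hφdef
    have hφ : ∀ x, φ x = f' x + M * f x := fun x => by
      simp [hφdef, smul_eq_mul]
    have hφS : ∀ s ∈ S, φ s ≤ c' + M * c := by
      intro s hs
      by_cases hsF : s ∈ F
      · have h1 : f s = c := (hFeq ▸ hsF).2
        have h2 : f' s ≤ c' := hf' s hsF
        rw [hφ, h1]; linarith
      · exact le_of_lt (hφ s ▸ key s (Finset.mem_filter.2 ⟨hs, hsF⟩))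
    refine Or.inr (Or.inr ⟨φ, c' + M * c, hull_le hφS, ?_⟩)
    have hT := hF.eq_hull (S := S) rfl
    set T := S.filter (fun s => s ∈ F) with hTdef
    have hf'T : ∀ s ∈ T, f' s ≤ c' := by
      intro s hs
      exact hf' s (Finset.mem_filter.1 hs).2
    have hGT : G = convexHull ℝ ((T.filter (fun s => f' s = c') : Finset (V d)) : Set (V d)) := by
      rw [hGeq, hT, face_eq_hull_filter hf'T]
    have hfilt : S.filter (fun s => φ s = c' + M * c) = T.filter (fun s => f' s = c') := by
      rw [hTdef, Finset.filter_filter]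
      apply Finset.filter_congr
      intro s hs
      constructor
      · intro h1
        by_cases hsF : s ∈ F
        · have h2 : f s = c := (hFeq ▸ hsF).2
          rw [hφ, h2] at h1
          exact ⟨hsF, by linarith⟩
        · exact absurd (hφ s ▸ h1) (ne_of_lt (key s (Finset.mem_filter.2 ⟨hs, hsF⟩)))
      · rintro ⟨hsF, h1⟩
        have h2 : f s = c := (hFeq ▸ hsF).2
        rw [hφ, h1, h2]
    rw [hGT, ← hfilt, ← face_eq_hull_filter hφS]
  · have hSF : ∀ s ∈ S, s ∈ F := by
      intro s hs
      by_contra hns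
      exact hB ⟨s, Finset.mem_filter.2 ⟨hs, hns⟩⟩
    have hFconv : Convex ℝ F := by
      rw [hF.eq_hull (S := S) rfl]
      exact convex_convexHull ℝ _
    have : P ⊆ F := convexHull_min (fun s hs => hSF s hs) hFconv
    exact absurd (Set.Subset.antisymm hF.subset this) hFP

end Faces

section Pdim
variable {P F : Set (V d)}

lemma pdim_empty : pdim (∅ : Set (V d)) = -1 := by simp [pdim]

lemma pdim_nonneg (h : P ≠ ∅) : 0 ≤ pdim P := by
  simp [pdim, h]

lemma pdim_le_of_subset (h : F ⊆ P) (hF : F ≠ ∅) (hP : P ≠ ∅) : pdim F ≤ pdim P := by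
  simp only [pdim, hF, hP, if_neg, if_false]
  exact_mod_cast Submodule.finrank_mono (AffineSubspace.direction_le (affineSpan_mono ℝ h))

/-- Strict monotonicity of dimension on faces. -/
lemma IsFace.pdim_lt (hF : IsFace P F) (hne : F ≠ P) : pdim F < pdim P := by
  have hPne : P ≠ ∅ := by
    rintro rfl
    exact hne (Set.subset_empty_iff.1 hF.subset)
  by_cases hFe : F = ∅
  · rw [hFe, pdim_empty]
    exact lt_of_lt_of_le (by norm_num) (pdim_nonneg hPne)
  rcases lt_or_eq_of_le (pdim_le_of_subset hF.subset hFe hPne) with h | h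
  · exact h
  exfalso
  obtain ⟨f, c, hf, hFeq⟩ := hF.exposed hne
  -- directions are equal
  have hdir : (affineSpan ℝ F).direction = (affineSpan ℝ P).direction := by
    apply Submodule.eq_of_le_of_finrank_eq (AffineSubspace.direction_le (affineSpan_mono ℝ hF.subset))
    simp only [pdim, hFe, hPne, if_neg, if_false] at h
    exact_mod_cast h
  obtain ⟨p, hp⟩ := Set.nonempty_iff_ne_empty.2 hFe
  have hspan : affineSpan ℝ F = affineSpan ℝ P := by
    apply AffineSubspace.ext_of_direction_eq hdir
    exact ⟨p, mem_affineSpan ℝ hp, mem_affineSpan ℝ (hF.subset hp)⟩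
  -- `f = c` on the affine span of `F`
  have hH : affineSpan ℝ F ≤ AffineSubspace.comap f.toAffineMap (AffineSubspace.mk' c (⊥ : Submodule ℝ ℝ)) := by
    apply affineSpan_le.2
    intro x hx
    have : f x = c := (hFeq ▸ hx).2
    simp only [AffineSubspace.mem_coe, AffineSubspace.mem_comap, LinearMap.coe_toAffineMap]
    rw [this]
    exact AffineSubspace.self_mem_mk' c ⊥
  have hPf : ∀ x ∈ P, f x = c := by
    intro x hx
    have h1 : x ∈ affineSpan ℝ F := hspan ▸ mem_affineSpan ℝ hx
    have h2 := hH h1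
    simp only [AffineSubspace.mem_comap, LinearMap.coe_toAffineMap] at h2
    rcases (AffineSubspace.mem_mk').1 h2 with h3
    simpa [vsub_eq_sub, sub_eq_zero] using (Submodule.mem_bot ℝ).1 h3
  apply hne
  rw [hFeq]
  exact Set.Subset.antisymm (fun x hx => hx.1) (fun x hx => ⟨hx, hPf x hx⟩)

end Pdim

section Translate
variable {P F : Set (V d)} {v : V d}

lemma isPolytope_vadd (hP : IsPolytope P) : IsPolytope (v +ᵥ P) := by
  obtain ⟨S, rfl⟩ := hP
  refine ⟨S.image (fun s => v + s), ?_⟩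
  rw [Finset.coe_image, ← convexHull_vadd]
  congr 1

lemma isFace_vadd (h : IsFace P F) : IsFace (v +ᵥ P) (v +ᵥ F) := by
  rcases h with rfl | rfl | ⟨f, c, hf, rfl⟩
  · simpa [Set.vadd_set_empty] using (isFace_empty (P := v +ᵥ P))
  · exact isFace_self
  · refine Or.inr (Or.inr ⟨f, c + f v, ?_, ?_⟩)
    · rintro x ⟨y, hy, rfl⟩
      simp only [vadd_eq_add, map_add]
      have := hf y hy
      linarith [hf y hy]
    · ext x
      constructor
      · rintro ⟨y, ⟨hy, hfy⟩, rfl⟩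
        refine ⟨⟨y, hy, rfl⟩, ?_⟩
        simp only [vadd_eq_add, map_add, hfy]
        ring
      · rintro ⟨⟨y, hy, rfl⟩, hfx⟩
        refine ⟨y, ⟨hy, ?_⟩, rfl⟩
        simp only [vadd_eq_add, map_add] at hfx
        linarith

lemma vadd_set_cancel (v : V d) (X : Set (V d)) : (-v) +ᵥ (v +ᵥ X) = X := by
  rw [vadd_vadd, neg_add_cancel, zero_vadd]

lemma pdim_vadd (X : Set (V d)) : pdim (v +ᵥ X) = pdim X := by
  by_cases hX : X = ∅
  · simp [hX]
  have h2 : v +ᵥ X ≠ ∅ := by simpa [Set.vadd_set_eq_empty] using hX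
  simp only [pdim, hX, h2, if_neg, if_false]
  have h3 : v +ᵥ X = (AffineEquiv.constVAdd ℝ (V d) v).toAffineMap '' X := rfl
  rw [h3, ← AffineSubspace.map_span, AffineSubspace.map_direction]
  congr 1
  have h4 : ((AffineEquiv.constVAdd ℝ (V d) v).toAffineMap).linear = LinearMap.id := rfl
  rw [h4, Submodule.map_id]

end Translate

/-- Existence of a linear functional vanishing on `U` and equal to `1` at `x ∉ U`. -/
lemma exists_functional (U : Submodule ℝ (V d)) {x : V d} (hx : x ∉ U) :
    ∃ g : (V d) →ₗ[ℝ] ℝ, (∀ u ∈ U, g u = 0) ∧ g x = 1 := by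
  have h1 : U.mkQ x ≠ 0 := by
    simpa [Submodule.mkQ_apply, Submodule.Quotient.mk_eq_zero] using hx
  have h2 : ¬ ∀ φ : Module.Dual ℝ ((V d) ⧸ U), φ (U.mkQ x) = 0 := by
    rw [Module.forall_dual_apply_eq_zero_iff]; exact h1
  push_neg at h2
  obtain ⟨φ, hφ⟩ := h2
  refine ⟨(φ (U.mkQ x))⁻¹ • (φ.comp U.mkQ), fun u hu => ?_, ?_⟩
  · have : U.mkQ u = 0 := by
      simpa [Submodule.mkQ_apply, Submodule.Quotient.mk_eq_zero] using hu
    simp [this]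
  · simp only [Submodule.mkQ_apply] at hφ ⊢
    simp only [LinearMap.smul_apply, LinearMap.coe_comp, Function.comp_apply, Submodule.mkQ_apply,
      smul_eq_mul]
    exact inv_mul_cancel₀ hφ

section Facet

variable {S : Finset (V d)} {F : Set (V d)}

lemma exists_vertex_notMem (hF : IsFace (convexHull ℝ (S : Set (V d))) F)
    (hFP : F ≠ convexHull ℝ (S : Set (V d))) : ∃ s ∈ S, s ∉ F := by
  by_contra hc
  push_neg at hc
  have hFconv : Convex ℝ F := by
    rw [hF.eq_hull (S := S) rfl]
    exact convex_convexHull ℝ _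
  have : convexHull ℝ (S : Set (V d)) ⊆ F := convexHull_min (fun s hs => hc s hs) hFconv
  exact hFP (Set.Subset.antisymm hF.subset this)

lemma exists_nonempty_proper_face (h1 : 1 ≤ pdim (convexHull ℝ (S : Set (V d)))) :
    ∃ F, IsFace (convexHull ℝ (S : Set (V d))) F ∧ F ≠ convexHull ℝ (S : Set (V d)) ∧ F ≠ ∅ := by
  set P := convexHull ℝ (S : Set (V d)) with hPdef
  have hPne : P ≠ ∅ := by
    intro h
    rw [h, pdim_empty] at h1
    norm_num at h1
  -- there are two distinct points of `S`
  have hxy : ∃ x ∈ S, ∃ y ∈ S, x ≠ y := by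
    by_contra hc
    push_neg at hc
    have hle : (affineSpan ℝ P).direction ≤ ⊥ := by
      rw [direction_affineSpan, hPdef, ← direction_affineSpan, affineSpan_convexHull,
        direction_affineSpan, vectorSpan_def]
      apply Submodule.span_le.2
      rintro z ⟨a, ha, b, hb, rfl⟩
      have : a = b := hc a ha b hb
      simp [this, vsub_eq_sub]
    have h0 : Module.finrank ℝ (affineSpan ℝ P).direction = 0 := by
      rw [le_bot_iff.1 hle]; exact finrank_bot ℝ _
    rw [pdim, if_neg hPne, h0] at h1
    norm_num at h1
  obtain ⟨x, hx, y, hy, hxyne⟩ := hxy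
  obtain ⟨i, hi⟩ : ∃ i, x i ≠ y i := by
    by_contra hc; push_neg at hc; exact hxyne (funext hc)
  set f : V d →ₗ[ℝ] ℝ := LinearMap.proj i with hfdef
  have hSne : S.Nonempty := ⟨x, hx⟩
  set c := S.sup' hSne (fun s => f s) with hcdef
  have hfS : ∀ s ∈ S, f s ≤ c := fun s hs => Finset.le_sup' (fun s => f s) hs
  refine ⟨{z ∈ P | f z = c}, Or.inr (Or.inr ⟨f, c, hull_le hfS, rfl⟩), ?_, ?_⟩
  · -- proper: one of x, y has value < c
    have hfx : f x ≤ c := hfS x hx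
    have hfy : f y ≤ c := hfS y hy
    have hne : f x ≠ f y := hi
    intro hFP
    rcases lt_or_eq_of_le hfx with h | h
    · have hxP : x ∈ P := subset_convexHull ℝ _ hx
      rw [← hFP] at hxP
      exact absurd hxP.2 (ne_of_lt h)
    rcases lt_or_eq_of_le hfy with h' | h'
    · have hyP : y ∈ P := subset_convexHull ℝ _ hy
      rw [← hFP] at hyP
      exact absurd hyP.2 (ne_of_lt h')
    exact hne (h.trans h'.symm)
  · obtain ⟨s₁, hs₁, hs₁eq⟩ := Finset.exists_mem_eq_sup' hSne (fun s => f s)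
    intro hFe
    rw [Set.eq_empty_iff_forall_notMem] at hFe
    exact hFe s₁ ⟨subset_convexHull ℝ _ hs₁, hs₁eq.symm⟩

/-- Core rotation argument: a maximal proper face through the origin has dimension
at least `pdim P - 1`. -/
lemma maximal_pdim_aux (hF : IsFace (convexHull ℝ (S : Set (V d))) F)
    (hFP : F ≠ convexHull ℝ (S : Set (V d))) (h0 : (0 : V d) ∈ F)
    (hmax : ∀ F', IsFace (convexHull ℝ (S : Set (V d))) F' →
      F' ≠ convexHull ℝ (S : Set (V d)) → F ⊆ F' → F = F') :
    pdim (convexHull ℝ (S : Set (V d))) - 1 ≤ pdim F := by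
  set P := convexHull ℝ (S : Set (V d)) with hPdef
  by_contra hcon
  push_neg at hcon
  have h0P : (0 : V d) ∈ P := hF.subset h0
  have hPne : P ≠ ∅ := Set.nonempty_iff_ne_empty.1 ⟨0, h0P⟩
  have hFne : F ≠ ∅ := Set.nonempty_iff_ne_empty.1 ⟨0, h0⟩
  set n := Module.finrank ℝ (affineSpan ℝ P).direction with hndef
  set kF := Module.finrank ℝ (affineSpan ℝ F).direction with hkdef
  have hpdimP : pdim P = n := by rw [pdim, if_neg hPne]
  have hpdimF : pdim F = kF := by rw [pdim, if_neg hFne]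
  have hkn : kF + 2 ≤ n := by
    rw [hpdimP, hpdimF] at hcon
    omega
  set U : Submodule ℝ (V d) := Submodule.span ℝ F with hUdef
  have hFU : F ⊆ (U : Set (V d)) := Submodule.subset_span
  have hUdim : Module.finrank ℝ U ≤ kF := by
    have hle : U ≤ (affineSpan ℝ F).direction := by
      apply Submodule.span_le.2
      intro x hx
      have := AffineSubspace.vsub_mem_direction (mem_affineSpan ℝ hx) (mem_affineSpan ℝ h0)
      simpa [vsub_eq_sub] using this
    exact Submodule.finrank_mono hle
  set W : Submodule ℝ (V d) := (affineSpan ℝ P).direction with hWdef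
  have hPW : ∀ x ∈ P, x ∈ W := by
    intro x hx
    have := AffineSubspace.vsub_mem_direction (mem_affineSpan ℝ hx) (mem_affineSpan ℝ h0P)
    simpa [vsub_eq_sub] using this
  have hWspan : W ≤ Submodule.span ℝ P := by
    rw [hWdef, direction_affineSpan, vectorSpan_def]
    apply Submodule.span_le.2
    rintro z ⟨a, ha, b, hb, rfl⟩
    simpa [vsub_eq_sub] using sub_mem (Submodule.subset_span ha) (Submodule.subset_span hb)
  obtain ⟨f, c, hf, hFeq⟩ := hF.exposed hFP
  have hc0 : c = 0 := by
    have : f 0 = c := (hFeq ▸ h0).2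
    simpa using this.symm
  subst hc0
  -- choose s₀ ∈ S outside the span of F
  have hs₀ : ∃ s₀ ∈ S, s₀ ∉ U := by
    by_contra hcn
    push_neg at hcn
    have hWU : W ≤ U := by
      rw [hWdef, direction_affineSpan, hPdef, ← direction_affineSpan, affineSpan_convexHull,
        direction_affineSpan, vectorSpan_def]
      apply Submodule.span_le.2
      rintro z ⟨a, ha, b, hb, rfl⟩
      simpa [vsub_eq_sub] using sub_mem (hcn a ha) (hcn b hb)
    have h5 : n ≤ Module.finrank ℝ U := by rw [hndef]; exact Submodule.finrank_mono hWU
    omega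
  obtain ⟨s₀, hs₀S, hs₀U⟩ := hs₀
  obtain ⟨g, hgU, hgs₀⟩ := exists_functional U hs₀U
  have hgF : ∀ x ∈ F, g x = 0 := fun x hx => hgU x (hFU hx)
  have hfF : ∀ x ∈ F, f x = 0 := fun x hx => (hFeq ▸ hx).2
  have hfneg : ∀ s ∈ S, s ∉ F → f s < 0 := by
    intro s hs hsF
    have h1 : f s ≤ 0 := hf s (subset_convexHull ℝ _ hs)
    rcases lt_or_eq_of_le h1 with h2 | h2
    · exact h2
    · exact absurd (hFeq ▸ ⟨subset_convexHull ℝ _ hs, h2⟩) hsF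
  have hs₀F : s₀ ∉ F := fun h => hs₀U (hFU h)
  -- Stage 1
  set T := S.filter (fun s => s ∉ F ∧ 0 < g s) with hTdef
  have hT : T.Nonempty := ⟨s₀, Finset.mem_filter.2 ⟨hs₀S, hs₀F, by rw [hgs₀]; norm_num⟩⟩
  set r := T.inf' hT (fun s => (-f s) / (g s)) with hrdef
  have hr : 0 < r := by
    rw [hrdef, Finset.lt_inf'_iff]
    intro s hs
    obtain ⟨hsS, hsF, hsg⟩ := Finset.mem_filter.1 hs
    exact div_pos (by linarith [hfneg s hsS hsF]) hsg
  set φ : V d →ₗ[ℝ] ℝ := f + r • g with hφdef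
  have hφ : ∀ x, φ x = f x + r * g x := fun x => by simp [hφdef, smul_eq_mul]
  have hφS : ∀ s ∈ S, φ s ≤ 0 := by
    intro s hs
    by_cases hsF : s ∈ F
    · rw [hφ, hfF s hsF, hgF s hsF]; norm_num
    by_cases hsg : 0 < g s
    · have hsT : s ∈ T := Finset.mem_filter.2 ⟨hs, hsF, hsg⟩
      have h1 : r ≤ (-f s) / (g s) := Finset.inf'_le _ hsT
      have h2 := (le_div_iff₀ hsg).1 h1
      rw [hφ]; linarith
    · push_neg at hsg
      have := hfneg s hs hsF
      rw [hφ]; nlinarith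
  have hG : IsFace P {x ∈ P | φ x = 0} := Or.inr (Or.inr ⟨φ, 0, hull_le hφS, rfl⟩)
  have hFG : F ⊆ {x ∈ P | φ x = 0} := by
    intro x hx
    exact ⟨hF.subset hx, by rw [hφ, hfF x hx, hgF x hx]; ring⟩
  have hGne : F ≠ {x ∈ P | φ x = 0} := by
    obtain ⟨s₁, hs₁T, hs₁eq⟩ := Finset.exists_mem_eq_inf' hT (fun s => (-f s) / (g s))
    obtain ⟨hs₁S, hs₁F, hs₁g⟩ := Finset.mem_filter.1 hs₁T
    intro h
    apply hs₁F
    rw [h]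
    refine ⟨subset_convexHull ℝ _ hs₁S, ?_⟩
    have hr2 : r = -f s₁ / g s₁ := by rw [hrdef]; exact hs₁eq
    show φ s₁ = 0
    rw [hφ, hr2, div_mul_cancel₀ _ (ne_of_gt hs₁g)]
    ring
  have hGP : {x ∈ P | φ x = 0} = P := by
    by_contra hGP
    exact hGne (hmax _ hG hGP hFG)
  have hφP : ∀ x ∈ P, φ x = 0 := by
    intro x hx
    have h9 : x ∈ {x ∈ P | φ x = 0} := by rw [hGP]; exact hx
    exact h9.2
  have hgpos : ∀ s ∈ S, s ∉ F → 0 < g s := by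
    intro s hs hsF
    have h1 := hφP s (subset_convexHull ℝ _ hs)
    rw [hφ] at h1
    have h2 := hfneg s hs hsF
    nlinarith
  -- Stage 2: find u in W ∩ ker g outside U
  have hfr : Module.finrank ℝ (W ⊓ LinearMap.ker g : Submodule ℝ (V d)) + 1 ≥ n := by
    have h1 : Module.finrank ℝ (LinearMap.range g) + Module.finrank ℝ (LinearMap.ker g) = d := by
      rw [LinearMap.finrank_range_add_finrank_ker g, Module.finrank_fin_fun]
    have h2 : Module.finrank ℝ (LinearMap.range g) ≤ 1 := by
      simpa using Submodule.finrank_le (LinearMap.range g)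
    have h3 : Module.finrank ℝ (W ⊔ LinearMap.ker g : Submodule ℝ (V d))
        + Module.finrank ℝ (W ⊓ LinearMap.ker g : Submodule ℝ (V d))
        = Module.finrank ℝ W + Module.finrank ℝ (LinearMap.ker g) :=
      Submodule.finrank_sup_add_finrank_inf_eq W (LinearMap.ker g)
    have h4 : Module.finrank ℝ (W ⊔ LinearMap.ker g : Submodule ℝ (V d)) ≤ d := by
      have := Submodule.finrank_le (W ⊔ LinearMap.ker g : Submodule ℝ (V d))
      simpa [Module.finrank_fin_fun] using this
    have h5 : n = Module.finrank ℝ W := hndef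
    omega
  have hu : ∃ u, u ∈ (W ⊓ LinearMap.ker g : Submodule ℝ (V d)) ∧ u ∉ U := by
    by_contra hcn
    push_neg at hcn
    have hle : (W ⊓ LinearMap.ker g : Submodule ℝ (V d)) ≤ U := fun x hx => hcn x hx
    have := Submodule.finrank_mono hle
    omega
  obtain ⟨u, hu, huU⟩ := hu
  obtain ⟨g₂, hg₂U, hg₂u⟩ := exists_functional U huU
  set B := S.filter (fun s => s ∉ F) with hBdef
  have hB : B.Nonempty := ⟨s₀, Finset.mem_filter.2 ⟨hs₀S, hs₀F⟩⟩
  set t := B.sup' hB (fun s => g₂ s / g s) with htdef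
  set ψ : V d →ₗ[ℝ] ℝ := g₂ - t • g with hψdef
  have hψ : ∀ x, ψ x = g₂ x - t * g x := fun x => by simp [hψdef, smul_eq_mul]
  have hψS : ∀ s ∈ S, ψ s ≤ 0 := by
    intro s hs
    by_cases hsF : s ∈ F
    · rw [hψ, hg₂U s (hFU hsF), hgF s hsF]
      norm_num
    · have h1 : 0 < g s := hgpos s hs hsF
      have h2 : g₂ s / g s ≤ t := Finset.le_sup' (fun s => g₂ s / g s) (Finset.mem_filter.2 ⟨hs, hsF⟩)
      have h3 := (div_le_iff₀ h1).1 h2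
      rw [hψ]; linarith
  have hG₂ : IsFace P {x ∈ P | ψ x = 0} := Or.inr (Or.inr ⟨ψ, 0, hull_le hψS, rfl⟩)
  have hFG₂ : F ⊆ {x ∈ P | ψ x = 0} := by
    intro x hx
    refine ⟨hF.subset hx, ?_⟩
    rw [hψ, hg₂U x (hFU hx), hgF x hx]; ring
  have hG₂ne : F ≠ {x ∈ P | ψ x = 0} := by
    obtain ⟨s₂, hs₂B, hs₂eq⟩ := Finset.exists_mem_eq_sup' hB (fun s => g₂ s / g s)
    obtain ⟨hs₂S, hs₂F⟩ := Finset.mem_filter.1 hs₂B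
    intro h
    apply hs₂F
    rw [h]
    refine ⟨subset_convexHull ℝ _ hs₂S, ?_⟩
    have ht2 : t = g₂ s₂ / g s₂ := by rw [htdef]; exact hs₂eq
    show ψ s₂ = 0
    rw [hψ, ht2, div_mul_cancel₀ _ (ne_of_gt (hgpos s₂ hs₂S hs₂F))]
    ring
  have hG₂P : {x ∈ P | ψ x = 0} = P := by
    by_contra hGP'
    exact hG₂ne (hmax _ hG₂ hGP' hFG₂)
  have hψP : ∀ x ∈ P, ψ x = 0 := by
    intro x hx
    have h9 : x ∈ {x ∈ P | ψ x = 0} := by rw [hG₂P]; exact hx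
    exact h9.2
  -- ψ vanishes on span P ⊇ W ∋ u, contradiction
  have hspan : Submodule.span ℝ P ≤ LinearMap.ker ψ := by
    apply Submodule.span_le.2
    intro x hx
    exact LinearMap.mem_ker.2 (hψP x hx)
  have hψu : ψ u = 0 := hspan (hWspan hu.1)
  rw [hψ] at hψu
  have hgu : g u = 0 := hu.2
  rw [hg₂u, hgu] at hψu
  norm_num at hψu

end Facet

section FacetExists
variable {P : Set (V d)}

lemma vadd_set_injective (v : V d) : Function.Injective (fun X : Set (V d) => v +ᵥ X) := by
  intro X Y hXY
  have h1 := congrArg (fun Z => (-v) +ᵥ Z) hXY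
  simpa [vadd_set_cancel] using h1

/-- Every nonempty polytope has a facet. -/
lemma exists_facet (hP : IsPolytope P) (hPne : P ≠ ∅) :
    ∃ F, IsFace P F ∧ F ≠ P ∧ pdim F = pdim P - 1 := by
  have hfin : {F : Set (V d) | IsFace P F ∧ F ≠ P}.Finite :=
    (faces_finite hP).subset (fun F hF => hF.1)
  have hne : {F : Set (V d) | IsFace P F ∧ F ≠ P}.Nonempty :=
    ⟨∅, isFace_empty, Ne.symm hPne⟩
  obtain ⟨F, hFmem, hFmax⟩ := Set.Finite.exists_maximalFor id _ hfin hne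
  obtain ⟨hF, hFP⟩ := hFmem
  simp only [id] at hFmax
  have hmax : ∀ F', IsFace P F' → F' ≠ P → F ⊆ F' → F = F' :=
    fun F' h1 h2 h3 => Set.Subset.antisymm h3 (hFmax ⟨h1, h2⟩ h3)
  have hlt : pdim F < pdim P := hF.pdim_lt hFP
  refine ⟨F, hF, hFP, ?_⟩
  by_cases hFe : F = ∅
  · -- then pdim P = 0
    subst hFe
    have hp0 : pdim P ≤ 0 := by
      by_contra hc
      push_neg at hc
      have h1 : 1 ≤ pdim P := hc
      obtain ⟨S, rfl⟩ := hP
      obtain ⟨F', hF', hF'P, hF'ne⟩ := exists_nonempty_proper_face h1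
      exact hF'ne (hmax F' hF' hF'P (Set.empty_subset _)).symm
    have := pdim_nonneg hPne
    rw [pdim_empty]
    omega
  · obtain ⟨p, hp⟩ := Set.nonempty_iff_ne_empty.2 hFe
    -- translate so that `p` goes to the origin
    obtain ⟨S, hSP⟩ := hP
    have hP' : IsPolytope ((-p) +ᵥ P) := isPolytope_vadd ⟨S, hSP⟩
    obtain ⟨S', hS'⟩ := hP'
    have hFv : IsFace (convexHull ℝ (S' : Set (V d))) ((-p) +ᵥ F) := by
      rw [← hS']; exact isFace_vadd hF
    have hFPv : (-p) +ᵥ F ≠ convexHull ℝ (S' : Set (V d)) := by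
      rw [← hS']
      intro hc
      exact hFP (vadd_set_injective (-p) hc)
    have h0v : (0 : V d) ∈ (-p) +ᵥ F := ⟨p, hp, by simp⟩
    have hmaxv : ∀ F', IsFace (convexHull ℝ (S' : Set (V d))) F' →
        F' ≠ convexHull ℝ (S' : Set (V d)) → (-p) +ᵥ F ⊆ F' → (-p) +ᵥ F = F' := by
      intro F' h1 h2 h3
      rw [← hS'] at h1 h2
      have h4 : IsFace P (p +ᵥ F') := by
        have := isFace_vadd (v := p) h1
        rwa [vadd_vadd, add_neg_cancel, zero_vadd] at this
      have h5 : p +ᵥ F' ≠ P := by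
        intro hc
        apply h2
        rw [← hc, vadd_vadd, neg_add_cancel, zero_vadd]
      have h6 : F ⊆ p +ᵥ F' := by
        have := Set.vadd_set_mono (a := p) h3
        rwa [vadd_vadd, add_neg_cancel, zero_vadd] at this
      have h7 := hmax _ h4 h5 h6
      rw [h7, vadd_vadd, neg_add_cancel, zero_vadd]
    have hauxres := maximal_pdim_aux hFv hFPv h0v hmaxv
    rw [← hS'] at hauxres
    rw [pdim_vadd, pdim_vadd] at hauxres
    omega

end FacetExists


section Invariance

variable {P G : Set (V d)}

lemma faceSet_of_face (hP : IsPolytope P) (hG : IsFace P G) :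
    {K : Set (V d) | IsFace G K} = {K : Set (V d) | IsFace P K ∧ K ⊆ G} := by
  ext K
  constructor
  · intro hK
    exact ⟨IsFace.trans hP hG hK, hK.subset⟩
  · rintro ⟨h1, h2⟩
    exact IsFace.of_subset h1 hG h2

lemma isFace_empty_iff {G : Set (V d)} (h : IsFace (∅ : Set (V d)) G) : G = ∅ := by
  rcases h with rfl | rfl | ⟨f, c, _, rfl⟩
  · rfl
  · rfl
  · ext x; simp

/-- Main invariance: the `g`-polynomial only depends on the face poset. -/
lemma g_invariant {g h : Set (V d) → Polynomial ℤ} (hGH : IsGH g h) :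
    ∀ N : ℕ, ∀ P P' : Set (V d), IsPolytope P → IsPolytope P' →
    {G : Set (V d) | IsFace P G}.ncard ≤ N →
    ∀ φ : Set (V d) → Set (V d),
      Set.BijOn φ {G : Set (V d) | IsFace P G} {G : Set (V d) | IsFace P' G} →
      (∀ G₁ ∈ {G : Set (V d) | IsFace P G}, ∀ G₂ ∈ {G : Set (V d) | IsFace P G},
        (G₁ ⊆ G₂ ↔ φ G₁ ⊆ φ G₂)) →
      pdim P = pdim P' ∧ g P = g P' := by
  intro N
  induction N with
  | zero =>
    intro P P' hP hP' hcard φ hbij hmono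
    exfalso
    have h1 : 0 < {G : Set (V d) | IsFace P G}.ncard :=
      (Set.ncard_pos (faces_finite hP)).2 ⟨∅, isFace_empty⟩
    omega
  | succ N ih =>
    intro P P' hP hP' hcard φ hbij hmono
    have hPmem : P ∈ {G : Set (V d) | IsFace P G} := isFace_self
    have hφtop : φ P = P' := by
      have h1 : IsFace P' (φ P) := hbij.mapsTo hPmem
      obtain ⟨G, hG, hφG⟩ := hbij.surjOn (show P' ∈ {G : Set (V d) | IsFace P' G} from isFace_self)
      have h2 : φ G ⊆ φ P := (hmono G hG P hPmem).1 (IsFace.subset hG)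
      rw [hφG] at h2
      exact Set.Subset.antisymm h1.subset h2
    have hφbot : φ ∅ = ∅ := by
      obtain ⟨G, hG, hφG⟩ := hbij.surjOn
        (show (∅ : Set (V d)) ∈ {G : Set (V d) | IsFace P' G} from isFace_empty)
      have h2 : φ ∅ ⊆ φ G := (hmono ∅ isFace_empty G hG).1 (Set.empty_subset _)
      rw [hφG] at h2
      exact Set.subset_empty_iff.1 h2
    by_cases hPe : P = ∅
    · subst hPe
      have hP'e : P' = ∅ := by rw [← hφtop, hφbot]
      subst hP'e
      exact ⟨rfl, rfl⟩
    have hP'e : P' ≠ ∅ := by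
      intro hc
      apply hPe
      apply hbij.injOn hPmem (show (∅ : Set (V d)) ∈ _ from isFace_empty)
      rw [hφtop, hφbot, hc]
    -- induction for proper faces
    have hrestr : ∀ G, IsFace P G → G ≠ P → pdim G = pdim (φ G) ∧ g G = g (φ G) := by
      intro G hG hGP
      have hGpoly : IsPolytope G := hG.polytope hP
      have hφG : IsFace P' (φ G) := hbij.mapsTo hG
      have hφGpoly : IsPolytope (φ G) := hφG.polytope hP'
      have hGfaces : ∀ K, IsFace G K → IsFace P K :=
        fun K hK => IsFace.trans hP hG hK
      have hφGfaces : ∀ K, IsFace (φ G) K → IsFace P' K :=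
        fun K hK => IsFace.trans hP' hφG hK
      have hb : Set.BijOn φ {K : Set (V d) | IsFace G K} {K : Set (V d) | IsFace (φ G) K} := by
        refine ⟨?_, hbij.injOn.mono (fun K hK => hGfaces K hK), ?_⟩
        · intro K hK
          have h1 : IsFace P K := hGfaces K hK
          have h2 : φ K ⊆ φ G := (hmono K h1 G hG).1 hK.subset
          exact IsFace.of_subset (hbij.mapsTo h1) hφG h2
        · intro K' hK'
          have h1 : IsFace P' K' := hφGfaces K' hK'
          obtain ⟨K, hK, rfl⟩ := hbij.surjOn h1
          have h2 : K ⊆ G := (hmono K hK G hG).2 hK'.subset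
          exact ⟨K, IsFace.of_subset hK hG h2, rfl⟩
      have hm : ∀ K₁ ∈ {K : Set (V d) | IsFace G K}, ∀ K₂ ∈ {K : Set (V d) | IsFace G K},
          (K₁ ⊆ K₂ ↔ φ K₁ ⊆ φ K₂) :=
        fun K₁ h₁ K₂ h₂ => hmono K₁ (hGfaces K₁ h₁) K₂ (hGfaces K₂ h₂)
      have hcardG : {K : Set (V d) | IsFace G K}.ncard ≤ N := by
        have hss : {K : Set (V d) | IsFace G K} ⊂ {K : Set (V d) | IsFace P K} := by
          constructor
          · exact fun K hK => hGfaces K hK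
          · intro hc
            have h1 : IsFace G P := hc hPmem
            exact hGP (Set.Subset.antisymm hG.subset h1.subset)
        have := Set.ncard_lt_ncard hss (faces_finite hP)
        omega
      exact ih G (φ G) hGpoly hφGpoly hcardG φ hb hm
    -- dimensions agree
    have hpd : pdim P = pdim P' := by
      obtain ⟨Fp, hFp, hFpP, hFpdim⟩ := exists_facet hP hPe
      obtain ⟨Fq, hFq, hFqP, hFqdim⟩ := exists_facet hP' hP'e
      have h1 : pdim Fp = pdim (φ Fp) := (hrestr Fp hFp hFpP).1
      have h2 : φ Fp ≠ P' := by
        intro hc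
        exact hFpP (hbij.injOn hFp hPmem (hc.trans hφtop.symm))
      have h3 : pdim (φ Fp) < pdim P' := (hbij.mapsTo hFp).pdim_lt h2
      obtain ⟨G, hG, hφG⟩ := hbij.surjOn (show Fq ∈ {G : Set (V d) | IsFace P' G} from hFq)
      have h4 : G ≠ P := by
        intro hc
        rw [hc, hφtop] at hφG
        exact hFqP hφG.symm
      have h5 : pdim G = pdim Fq := by rw [(hrestr G hG h4).1, hφG]
      have h6 : pdim G < pdim P := hG.pdim_lt h4
      omega
    -- h agrees
    have hh : h P = h P' := by
      rw [hGH.2.1 P hP, hGH.2.1 P' hP']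
      have himg : {F : Set (V d) | IsFace P' F ∧ F ≠ P'} =
          φ '' {F : Set (V d) | IsFace P F ∧ F ≠ P} := by
        ext F'
        constructor
        · rintro ⟨h1, h2⟩
          obtain ⟨F, hF, rfl⟩ := hbij.surjOn h1
          refine ⟨F, ⟨hF, ?_⟩, rfl⟩
          intro hc
          rw [hc, hφtop] at h2
          exact h2 rfl
        · rintro ⟨F, ⟨hF, hFP⟩, rfl⟩
          refine ⟨hbij.mapsTo hF, ?_⟩
          intro hc
          exact hFP (hbij.injOn hF hPmem (hc.trans hφtop.symm))
      rw [himg, finsum_mem_image (hbij.injOn.mono (fun F hF => hF.1))]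
      apply finsum_mem_congr rfl
      intro F hF
      rw [← hpd, ← (hrestr F hF.1 hF.2).1, ← (hrestr F hF.1 hF.2).2]
    -- g agrees
    refine ⟨hpd, ?_⟩
    obtain ⟨hc0, hci, hco⟩ := hGH.2.2 P hP hPe
    obtain ⟨hc0', hci', hco'⟩ := hGH.2.2 P' hP' hP'e
    apply Polynomial.ext
    intro i
    rcases Nat.eq_zero_or_pos i with hi | hi
    · subst hi
      rw [hc0, hc0', hh]
    by_cases hile : 2 * (i : ℤ) ≤ pdim P
    · rw [hci i hi hile, hci' i hi (hpd ▸ hile), hh]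
    · rw [hco i hi hile, hco' i hi (hpd ▸ hile)]

end Invariance


section Quotients
variable {P E Q Q₁ Q₂ : Set (V d)} {ψ ψ₁ ψ₂ : Set (V d) → Set (V d)}

/-- The quotient of `P` by `P` itself is the empty polytope. -/
lemma IsQuotientPair.self_eq_empty (hQ : IsQuotientPair P P Q ψ) : Q = ∅ := by
  obtain ⟨hQpoly, hbij, -⟩ := hQ
  have h1 : {G : Set (V d) | IsFace P G ∧ P ⊆ G} = {P} := by
    ext G
    simp only [Set.mem_setOf_eq, Set.mem_singleton_iff]
    exact ⟨fun ⟨h1, h2⟩ => Set.Subset.antisymm h1.subset h2, fun h => h ▸ ⟨isFace_self, subset_rfl⟩⟩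
  rw [h1] at hbij
  have h2 : {G : Set (V d) | IsFace Q G} = {ψ P} := by
    apply Set.Subset.antisymm
    · intro G hG
      obtain ⟨K, hK, rfl⟩ := hbij.surjOn hG
      rw [Set.mem_singleton_iff.1 hK]
      rfl
    · intro G hG
      rw [Set.mem_singleton_iff.1 hG]
      exact hbij.mapsTo rfl
  have h3 : (∅ : Set (V d)) ∈ {G : Set (V d) | IsFace Q G} := isFace_empty
  have h4 : Q ∈ {G : Set (V d) | IsFace Q G} := isFace_self
  rw [h2, Set.mem_singleton_iff] at h3 h4
  rw [h4, ← h3]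

/-- Any two quotient models of `P/E` have the same `g`-polynomial. -/
lemma quotient_g_eq {g h : Set (V d) → Polynomial ℤ} (hGH : IsGH g h)
    (h₁ : IsQuotientPair P E Q₁ ψ₁) (h₂ : IsQuotientPair P E Q₂ ψ₂) : g Q₁ = g Q₂ := by
  obtain ⟨hQ₁, hbij₁, hmono₁⟩ := h₁
  obtain ⟨hQ₂, hbij₂, hmono₂⟩ := h₂
  set A := {G : Set (V d) | IsFace P G ∧ E ⊆ G} with hA
  set ρ := Function.invFunOn ψ₁ A with hρ
  have hinv : Set.InvOn ρ ψ₁ A {G : Set (V d) | IsFace Q₁ G} := hbij₁.invOn_invFunOn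
  have hρbij : Set.BijOn ρ {G : Set (V d) | IsFace Q₁ G} A := Set.BijOn.symm hinv.symm hbij₁
  have hφbij : Set.BijOn (ψ₂ ∘ ρ) {G : Set (V d) | IsFace Q₁ G} {G : Set (V d) | IsFace Q₂ G} :=
    hbij₂.comp hρbij
  refine (g_invariant hGH ({G : Set (V d) | IsFace Q₁ G}.ncard) Q₁ Q₂ hQ₁ hQ₂ le_rfl
    (ψ₂ ∘ ρ) hφbij ?_).2
  intro K₁ hK₁ K₂ hK₂
  have hρ₁ : ρ K₁ ∈ A := hρbij.mapsTo hK₁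
  have hρ₂ : ρ K₂ ∈ A := hρbij.mapsTo hK₂
  have e₁ : ψ₁ (ρ K₁) = K₁ := hinv.2 hK₁
  have e₂ : ψ₁ (ρ K₂) = K₂ := hinv.2 hK₂
  calc K₁ ⊆ K₂ ↔ ψ₁ (ρ K₁) ⊆ ψ₁ (ρ K₂) := by rw [e₁, e₂]
    _ ↔ ρ K₁ ⊆ ρ K₂ := (hmono₁ _ hρ₁ _ hρ₂).symm
    _ ↔ ψ₂ (ρ K₁) ⊆ ψ₂ (ρ K₂) := hmono₂ _ hρ₁ _ hρ₂

/-- Canonical `g`-value of a quotient `P/E`. -/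
noncomputable def qcan (g : Set (V d) → Polynomial ℤ) (P E : Set (V d)) : Polynomial ℤ :=
  if hq : ∃ Q' ψ', IsQuotientPair P E Q' ψ' then g hq.choose else 0

lemma qcan_eq {g h : Set (V d) → Polynomial ℤ} (hGH : IsGH g h)
    (hQ : IsQuotientPair P E Q ψ) : qcan g P E = g Q := by
  have hq : ∃ Q' ψ', IsQuotientPair P E Q' ψ' := ⟨Q, ψ, hQ⟩
  rw [qcan, dif_pos hq]
  obtain ⟨ψ', hψ'⟩ := hq.choose_spec
  exact quotient_g_eq hGH hψ' hQ

end Quotients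

/-- The relative `g`-polynomial, defined by recursion on the face poset. -/
noncomputable def grFun (g : Set (V d) → Polynomial ℤ) (E F : Set (V d)) : Polynomial ℤ :=
  if hE : IsPolytope E then
    g E - ∑ G ∈ ((faces_finite hE).toFinset.filter (fun G => F ⊆ G ∧ G ≠ E)).attach,
      grFun g (↑G) F * qcan g E (↑G)
  else 0
termination_by {G : Set (V d) | IsFace E G}.ncard
decreasing_by
  obtain ⟨hG1, hG2, hG3⟩ :
      IsFace E (↑G : Set (V d)) ∧ F ⊆ (↑G : Set (V d)) ∧ (↑G : Set (V d)) ≠ E := by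
    have := G.2
    rw [Finset.mem_filter, Set.Finite.mem_toFinset] at this
    exact ⟨this.1, this.2.1, this.2.2⟩
  apply Set.ncard_lt_ncard
  · constructor
    · exact fun K hK => IsFace.trans hE hG1 hK
    · intro hc
      have h1 : IsFace (↑G : Set (V d)) E := hc isFace_self
      exact hG3 (Set.Subset.antisymm hG1.subset h1.subset)
  · exact faces_finite hE

end Aux


/-- There exists a family of relative `g`-polynomials `g(P,F)`,
one for each pair of a polytope `P` and a face `F` of `P`, satisfying
`∑_{F ≤ E ≤ P} g(E,F)·g(P/E) = g(P)` (with the convention `g(P/P) = 1`). -/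


theorem relative_g_exists {d : ℕ} (g h : Set (Fin d → ℝ) → Polynomial ℤ)
    (hGH : IsGH g h) :
    ∃ gr : Set (Fin d → ℝ) → Set (Fin d → ℝ) → Polynomial ℤ, IsRelG g gr := by
  refine ⟨grFun g, ?_⟩
  intro P F Q ψ hP hF hQall
  set s := (faces_finite hP).toFinset.filter (fun E => F ⊆ E) with hs
  have hset : {E : Set (V d) | IsFace P E ∧ F ⊆ E} = ↑s := by
    ext E
    simp only [Set.mem_setOf_eq, hs, Finset.coe_filter, Set.Finite.mem_toFinset]
  rw [hset, finsum_mem_coe_finset]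
  have hPs : P ∈ s := Finset.mem_filter.2 ⟨(Set.Finite.mem_toFinset _).2 isFace_self, hF.subset⟩
  rw [← Finset.add_sum_erase s _ hPs]
  have hQP : g (Q P) = 1 := by
    rw [(hQall P isFace_self hF.subset).self_eq_empty]
    exact hGH.1
  rw [hQP, mul_one]
  have hgr : grFun g P F = g P - ∑ E ∈ s.erase P, grFun g E F * qcan g P E := by
    conv_lhs => rw [grFun]
    rw [dif_pos hP]
    congr 1
    rw [Finset.sum_attach ((faces_finite hP).toFinset.filter (fun G => F ⊆ G ∧ G ≠ P))
      (fun G => grFun g G F * qcan g P G)]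
    apply Finset.sum_congr ?_ (fun _ _ => rfl)
    ext E
    simp only [Finset.mem_filter, Set.Finite.mem_toFinset, Finset.mem_erase, hs]
    tauto
  have hterm : ∀ E ∈ s.erase P, grFun g E F * g (Q E) = grFun g E F * qcan g P E := by
    intro E hE
    obtain ⟨hEP, hEs⟩ := Finset.mem_erase.1 hE
    obtain ⟨hEf, hFE⟩ := Finset.mem_filter.1 hEs
    rw [Set.Finite.mem_toFinset] at hEf
    rw [qcan_eq hGH (hQall E hEf hFE)]
  rw [Finset.sum_congr rfl hterm, hgr]
  ring

end
end

section
/- For any convex polytope P and any faces F′ ≤ F of P, g(P,F) = Σ_{F′ ≤ E ≤ P} g(E,F′)·g(P/E, (E∨F)/E), where the sum runs over all faces E of P containing F′, E∨F is the smallest face of P containing both E and F, and (E∨F)/E denotes the face of the quotient polytope P/E corresponding to E∨F under the isomorphism of the face poset of P/E with the interval [E,P]. -/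
open Polynomial
open scoped Classical

noncomputable section

/-- `E ∨ F`: the smallest face of `P` containing both `E` and `F` (as the
intersection of all faces of `P` containing them). -/
def polyJoin {d : ℕ} (P E F : Set (Fin d → ℝ)) : Set (Fin d → ℝ) :=
  ⋂₀ {G : Set (Fin d → ℝ) | IsFace P G ∧ E ⊆ G ∧ F ⊆ G}

namespace RelGAux

variable {d : ℕ}

lemma isFace_empty (P : Set (Fin d → ℝ)) : IsFace P ∅ := Or.inl rfl

lemma isFace_self (P : Set (Fin d → ℝ)) : IsFace P P := Or.inr (Or.inl rfl)

lemma face_subset {P F : Set (Fin d → ℝ)} (h : IsFace P F) : F ⊆ P := by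
  rcases h with rfl | rfl | ⟨f, c, _, rfl⟩
  · exact Set.empty_subset _
  · exact le_refl _
  · exact Set.sep_subset _ _

/-- Key geometric lemma: a face cut out by `f = c` equals the convex hull of the
vertices where `f = c`. -/
lemma face_hull (S : Finset (Fin d → ℝ)) (f : (Fin d → ℝ) →ₗ[ℝ] ℝ) (c : ℝ)
    (hfc : ∀ x ∈ convexHull ℝ (S : Set (Fin d → ℝ)), f x ≤ c) :
    {x ∈ convexHull ℝ (S : Set (Fin d → ℝ)) | f x = c}
      = convexHull ℝ ((S.filter (fun v => f v = c) : Finset (Fin d → ℝ)) : Set (Fin d → ℝ)) := by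
  apply Set.Subset.antisymm
  · rintro x ⟨hx, hfx⟩
    rw [Finset.convexHull_eq] at hx
    obtain ⟨w, hw0, hw1, hwx⟩ := hx
    rw [Finset.centerMass_eq_of_sum_1 _ _ hw1] at hwx
    simp only [id] at hwx
    have hfxsum : ∑ y ∈ S, w y * f y = c := by
      have := congrArg f hwx
      rw [map_sum] at this
      simp only [map_smul, smul_eq_mul] at this
      rw [this, hfx]
    have hzero : ∀ y ∈ S, w y * (c - f y) = 0 := by
      have hsum : ∑ y ∈ S, w y * (c - f y) = 0 := by
        have : ∑ y ∈ S, w y * (c - f y) = (∑ y ∈ S, w y) * c - ∑ y ∈ S, w y * f y := by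
          rw [Finset.sum_mul, ← Finset.sum_sub_distrib]
          congr 1; ext y; ring
        rw [this, hw1, hfxsum]; ring
      intro y hy
      have hnn : ∀ y ∈ S, 0 ≤ w y * (c - f y) := fun y hy =>
        mul_nonneg (hw0 y hy) (sub_nonneg.mpr (hfc y (subset_convexHull ℝ _ (by exact_mod_cast hy))))
      exact (Finset.sum_eq_zero_iff_of_nonneg hnn).mp hsum y hy
    have hwz : ∀ y ∈ S, f y ≠ c → w y = 0 := by
      intro y hy hfy
      rcases mul_eq_zero.mp (hzero y hy) with h | h
      · exact h
      · exact absurd (by linarith [sub_eq_zero.mp h] : f y = c) hfy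
    rw [Finset.convexHull_eq]
    refine ⟨w, fun y hy => hw0 y (Finset.mem_filter.mp hy).1, ?_, ?_⟩
    · rw [← hw1]
      rw [← Finset.sum_filter_add_sum_filter_not S (fun v => f v = c) w]
      have : ∑ y ∈ S.filter (fun v => ¬ f v = c), w y = 0 :=
        Finset.sum_eq_zero fun y hy => hwz y (Finset.mem_filter.mp hy).1 (Finset.mem_filter.mp hy).2
      rw [this, add_zero]
    · have hsum1 : ∑ y ∈ S.filter (fun v => f v = c), w y = 1 := by
        rw [← hw1, ← Finset.sum_filter_add_sum_filter_not S (fun v => f v = c) w]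
        have : ∑ y ∈ S.filter (fun v => ¬ f v = c), w y = 0 :=
          Finset.sum_eq_zero fun y hy => hwz y (Finset.mem_filter.mp hy).1 (Finset.mem_filter.mp hy).2
        rw [this, add_zero]
      rw [Finset.centerMass_eq_of_sum_1 _ _ hsum1]
      simp only [id]
      rw [← hwx, ← Finset.sum_filter_add_sum_filter_not S (fun v => f v = c) (fun y => w y • y)]
      have : ∑ y ∈ S.filter (fun v => ¬ f v = c), w y • y = 0 :=
        Finset.sum_eq_zero fun y hy => by
          rw [hwz y (Finset.mem_filter.mp hy).1 (Finset.mem_filter.mp hy).2, zero_smul]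
      rw [this, add_zero]
  · apply convexHull_min
    · intro v hv
      simp only [Finset.coe_filter, Set.mem_setOf_eq] at hv
      exact ⟨subset_convexHull ℝ _ (by exact_mod_cast hv.1), hv.2⟩
    · have : {x ∈ convexHull ℝ (S : Set (Fin d → ℝ)) | f x = c}
          = convexHull ℝ (S : Set (Fin d → ℝ)) ∩ {x | f x = c} := rfl
      rw [this]
      exact (convex_convexHull ℝ _).inter (convex_hyperplane f.isLinear c)

end RelGAux

namespace RelGAux

variable {d : ℕ}

lemma face_canonical {S : Finset (Fin d → ℝ)} {F : Set (Fin d → ℝ)}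
    (hF : IsFace (convexHull ℝ (S : Set (Fin d → ℝ))) F) :
    ∃ T : Finset (Fin d → ℝ), T ⊆ S ∧ F = convexHull ℝ (T : Set (Fin d → ℝ)) := by
  rcases hF with rfl | rfl | ⟨f, c, hfc, rfl⟩
  · exact ⟨∅, Finset.empty_subset _, by simp⟩
  · exact ⟨S, Finset.Subset.refl _, rfl⟩
  · exact ⟨S.filter (fun v => f v = c), Finset.filter_subset _ _, face_hull S f c hfc⟩

lemma finite_faces {P : Set (Fin d → ℝ)} (hP : IsPolytope P) :
    {F : Set (Fin d → ℝ) | IsFace P F}.Finite := by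
  obtain ⟨S, rfl⟩ := hP
  apply Set.Finite.subset
    (Set.Finite.image (fun T : Finset (Fin d → ℝ) => convexHull ℝ (T : Set (Fin d → ℝ)))
      (S.powerset.finite_toSet))
  intro F hF
  obtain ⟨T, hTS, hFT⟩ := face_canonical hF
  exact ⟨T, Finset.mem_coe.mpr (Finset.mem_powerset.mpr hTS), hFT.symm⟩

lemma isPolytope_face {P F : Set (Fin d → ℝ)} (hP : IsPolytope P) (hF : IsFace P F) :
    IsPolytope F := by
  obtain ⟨S, rfl⟩ := hP
  obtain ⟨T, _, hFT⟩ := face_canonical hF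
  exact ⟨T, hFT⟩

lemma lin_neg {A B ε ε₀ : ℝ} (hA : A < 0) (hb : A + ε₀ * B < 0) (h1 : 0 ≤ ε) (h2 : ε ≤ ε₀) :
    A + ε * B < 0 := by
  rcases le_or_gt B 0 with hB | hB
  · nlinarith
  · nlinarith

lemma exists_eps (S : Finset (Fin d → ℝ)) (f g : (Fin d → ℝ) →ₗ[ℝ] ℝ) (b c : ℝ) :
    ∃ ε : ℝ, 0 < ε ∧ ∀ v ∈ S, f v < b → f v + ε * g v < b + ε * c := by
  classical
  induction S using Finset.induction_on with
  | empty => exact ⟨1, one_pos, by simp⟩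
  | @insert a S' ha IH =>
    obtain ⟨ε₀, hε₀, h₀⟩ := IH
    by_cases hfa : f a < b
    · rcases le_or_gt (g a) c with hga | hga
      · refine ⟨ε₀, hε₀, ?_⟩
        intro v hv hfv
        rcases Finset.mem_insert.mp hv with rfl | hv
        · nlinarith
        · exact h₀ v hv hfv
      · set ε₁ := min ε₀ ((b - f a) / (2 * (g a - c))) with hε₁def
        have hq : 0 < (b - f a) / (2 * (g a - c)) := by
          apply div_pos <;> nlinarith
        have hpos : 0 < ε₁ := lt_min hε₀ hq
        refine ⟨ε₁, hpos, ?_⟩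
        intro v hv hfv
        rcases Finset.mem_insert.mp hv with rfl | hv
        · have h2 : ε₁ ≤ (b - f v) / (2 * (g v - c)) := min_le_right _ _
          have h3 : ε₁ * (2 * (g v - c)) ≤ b - f v := by
            rw [← le_div_iff₀ (by nlinarith : (0:ℝ) < 2 * (g v - c))]
            exact h2
          nlinarith
        · have := h₀ v hv hfv
          have := lin_neg (by linarith : f v - b < 0)
            (by linarith : (f v - b) + ε₀ * (g v - c) < 0) hpos.le (min_le_left _ _)
          linarith
    · refine ⟨ε₀, hε₀, ?_⟩
      intro v hv hfv
      rcases Finset.mem_insert.mp hv with rfl | hv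
      · exact absurd hfv hfa
      · exact h₀ v hv hfv

lemma face_trans {P H K : Set (Fin d → ℝ)} (hP : IsPolytope P) (hH : IsFace P H)
    (hK : IsFace H K) : IsFace P K := by
  rcases hK with rfl | rfl | ⟨g, c, hgc, rfl⟩
  · exact isFace_empty P
  · exact hH
  · rcases hH with rfl | rfl | ⟨f, b, hfb, rfl⟩
    · have : {x ∈ (∅ : Set (Fin d → ℝ)) | g x = c} = ∅ := by
        ext x; simp
      rw [this]; exact isFace_empty P
    · exact Or.inr (Or.inr ⟨g, c, hgc, rfl⟩)
    · obtain ⟨S, rfl⟩ := hP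
      set P := convexHull ℝ (S : Set (Fin d → ℝ)) with hPdef
      obtain ⟨ε, hε, hsmall⟩ := exists_eps S f g b c
      have happ : ∀ x, (f + ε • g) x = f x + ε * g x := by
        intro x; simp
      have hbound : ∀ x ∈ P, (f + ε • g) x ≤ b + ε * c := by
        have hsub : P ⊆ {x | (f + ε • g) x ≤ b + ε * c} := by
          apply convexHull_min
          · intro v hv
            have hvS : v ∈ S := by exact_mod_cast hv
            have hvP : v ∈ P := subset_convexHull ℝ _ hv
            simp only [Set.mem_setOf_eq, happ]
            rcases eq_or_lt_of_le (hfb v hvP) with heq | hlt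
            · have hvH : v ∈ {x ∈ P | f x = b} := ⟨hvP, heq⟩
              have := hgc v hvH
              nlinarith
            · exact (hsmall v hvS hlt).le
          · exact convex_halfSpace_le (f + ε • g).isLinear _
        exact fun x hx => hsub hx
      refine Or.inr (Or.inr ⟨f + ε • g, b + ε * c, hbound, ?_⟩)
      apply Set.Subset.antisymm
      · rintro x ⟨⟨hxP, hfx⟩, hgx⟩
        exact ⟨hxP, by rw [happ, hfx, hgx]⟩
      · intro x hx
        have hxhull := (face_hull S (f + ε • g) (b + ε * c) hbound) ▸ hx
        have hKconv : Convex ℝ {x ∈ {x ∈ P | f x = b} | g x = c} := by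
          have h1 : {x ∈ {x ∈ P | f x = b} | g x = c}
              = (P ∩ {x | f x = b}) ∩ {x | g x = c} := by
            ext y
            simp only [Set.mem_setOf_eq, Set.mem_inter_iff, and_assoc]
          rw [h1]
          exact (((convex_convexHull ℝ _).inter (convex_hyperplane f.isLinear b)).inter
            (convex_hyperplane g.isLinear c))
        have hsub : (↑(S.filter (fun v => (f + ε • g) v = b + ε * c)) : Set (Fin d → ℝ))
            ⊆ {x ∈ {x ∈ P | f x = b} | g x = c} := by
          intro v hv
          simp only [Finset.coe_filter, Set.mem_setOf_eq] at hv
          obtain ⟨hvS, hveq⟩ := hv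
          rw [happ] at hveq
          have hvP : v ∈ P := subset_convexHull ℝ _ (by exact_mod_cast hvS)
          have hfvb : f v = b := by
            by_contra hne
            have hlt : f v < b := lt_of_le_of_ne (hfb v hvP) hne
            have := hsmall v hvS hlt
            linarith
          have hgvc : g v = c := by
            have : ε * g v = ε * c := by linarith
            exact mul_left_cancel₀ hε.ne' this
          exact ⟨⟨hvP, hfvb⟩, hgvc⟩
        exact convexHull_min hsub hKconv hxhull

end RelGAux

namespace RelGAux

variable {d : ℕ}

lemma isFace_of_face_subset {P H K : Set (Fin d → ℝ)} (hH : IsFace P H) (hK : IsFace P K)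
    (hsub : K ⊆ H) : IsFace H K := by
  rcases hK with rfl | rfl | ⟨f, c, hfc, rfl⟩
  · exact isFace_empty H
  · exact Or.inr (Or.inl (Set.Subset.antisymm hsub (face_subset hH)))
  · refine Or.inr (Or.inr ⟨f, c, fun x hx => hfc x ((face_subset hH) hx), ?_⟩)
    apply Set.Subset.antisymm
    · rintro x ⟨hxP, hfx⟩
      exact ⟨hsub ⟨hxP, hfx⟩, hfx⟩
    · rintro x ⟨hxH, hfx⟩
      exact ⟨(face_subset hH) hxH, hfx⟩

lemma isFace_face_iff {P G K : Set (Fin d → ℝ)} (hP : IsPolytope P) (hG : IsFace P G) :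
    IsFace G K ↔ (IsFace P K ∧ K ⊆ G) :=
  ⟨fun hK => ⟨face_trans hP hG hK, (face_subset hK)⟩,
   fun ⟨h1, h2⟩ => isFace_of_face_subset hG h1 h2⟩

lemma isFace_inter {P A B : Set (Fin d → ℝ)} (hA : IsFace P A) (hB : IsFace P B) :
    IsFace P (A ∩ B) := by
  rcases hA with rfl | rfl | ⟨f, b, hf, rfl⟩
  · rw [Set.empty_inter]; exact isFace_empty P
  · rw [Set.inter_eq_self_of_subset_right (face_subset hB)]; exact hB
  · rcases hB with rfl | rfl | ⟨g, c, hg, rfl⟩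
    · rw [Set.inter_empty]; exact isFace_empty P
    · rw [Set.inter_eq_self_of_subset_left (Set.sep_subset _ _)]
      exact Or.inr (Or.inr ⟨f, b, hf, rfl⟩)
    · refine Or.inr (Or.inr ⟨f + g, b + c, fun x hx => add_le_add (hf x hx) (hg x hx), ?_⟩)
      ext x
      simp only [Set.mem_inter_iff, Set.mem_setOf_eq, LinearMap.add_apply]
      constructor
      · rintro ⟨⟨hxP, h1⟩, _, h2⟩
        exact ⟨hxP, by rw [h1, h2]⟩
      · rintro ⟨hxP, hsum⟩
        have h1 := hf x hxP
        have h2 := hg x hxP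
        exact ⟨⟨hxP, by linarith⟩, hxP, by linarith⟩

lemma isFace_sInter {P : Set (Fin d → ℝ)} (hP : IsPolytope P)
    (𝒮 : Set (Set (Fin d → ℝ))) (h𝒮 : ∀ A ∈ 𝒮, IsFace P A) (hne : 𝒮.Nonempty) :
    IsFace P (⋂₀ 𝒮) := by
  have hfin : 𝒮.Finite := (finite_faces hP).subset h𝒮
  revert h𝒮 hne
  refine Set.Finite.induction_on
    (motive := fun 𝒮 _ => (∀ A ∈ 𝒮, IsFace P A) → 𝒮.Nonempty → IsFace P (⋂₀ 𝒮)) 𝒮 hfin ?_ ?_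
  · intro _ hne
    exact absurd rfl hne.ne_empty
  · intro a s _ hsfin IH h𝒮 _
    rw [Set.sInter_insert]
    rcases s.eq_empty_or_nonempty with rfl | hsne
    · rw [Set.sInter_empty, Set.inter_univ]
      exact h𝒮 a (Set.mem_insert _ _)
    · exact isFace_inter (h𝒮 a (Set.mem_insert _ _))
        (IH (fun A hA => h𝒮 A (Set.mem_insert_of_mem _ hA)) hsne)

lemma polyJoin_isFace {P E F : Set (Fin d → ℝ)} (hP : IsPolytope P)
    (hE : E ⊆ P) (hF : F ⊆ P) : IsFace P (polyJoin P E F) :=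
  isFace_sInter hP _ (fun _ hA => hA.1) ⟨P, isFace_self P, hE, hF⟩

lemma subset_polyJoin_left {P E F : Set (Fin d → ℝ)} : E ⊆ polyJoin P E F :=
  Set.subset_sInter fun _ hG => hG.2.1

lemma subset_polyJoin_right {P E F : Set (Fin d → ℝ)} : F ⊆ polyJoin P E F :=
  Set.subset_sInter fun _ hG => hG.2.2

lemma polyJoin_subset {P E F G : Set (Fin d → ℝ)} (hG : IsFace P G) (h1 : E ⊆ G)
    (h2 : F ⊆ G) : polyJoin P E F ⊆ G :=
  Set.sInter_subset_of_mem ⟨hG, h1, h2⟩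

end RelGAux

namespace RelGAux

variable {d : ℕ}

lemma psi_bottom {P E QE : Set (Fin d → ℝ)} {ψE : Set (Fin d → ℝ) → Set (Fin d → ℝ)}
    (hE : IsFace P E) (hqp : IsQuotientPair P E QE ψE) : ψE E = ∅ := by
  obtain ⟨_, hbij, hord⟩ := hqp
  have hEmem : E ∈ {G : Set (Fin d → ℝ) | IsFace P G ∧ E ⊆ G} := ⟨hE, subset_rfl⟩
  obtain ⟨G₀, hG₀, hψG₀⟩ := hbij.surjOn
    (show (∅ : Set (Fin d → ℝ)) ∈ {G : Set (Fin d → ℝ) | IsFace QE G} from isFace_empty QE)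
  have h := (hord E hEmem G₀ hG₀).mp hG₀.2
  rw [hψG₀] at h
  exact Set.subset_empty_iff.mp h

lemma psi_top {P E QE : Set (Fin d → ℝ)} {ψE : Set (Fin d → ℝ) → Set (Fin d → ℝ)}
    (hE : IsFace P E) (hqp : IsQuotientPair P E QE ψE) : ψE P = QE := by
  obtain ⟨_, hbij, hord⟩ := hqp
  have hPmem : P ∈ {G : Set (Fin d → ℝ) | IsFace P G ∧ E ⊆ G} := ⟨isFace_self P, face_subset hE⟩
  obtain ⟨G₁, hG₁, hψG₁⟩ := hbij.surjOn
    (show QE ∈ {G : Set (Fin d → ℝ) | IsFace QE G} from isFace_self QE)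
  apply Set.Subset.antisymm
  · exact face_subset (hbij.mapsTo hPmem)
  · rw [← hψG₁]
    exact (hord G₁ hG₁ P hPmem).mp (face_subset hG₁.1)

lemma quot_restrict {P E G QE : Set (Fin d → ℝ)} {ψE : Set (Fin d → ℝ) → Set (Fin d → ℝ)}
    (hP : IsPolytope P) (hG : IsFace P G) (hEG : E ⊆ G)
    (hqp : IsQuotientPair P E QE ψE) : IsQuotientPair G E (ψE G) ψE := by
  obtain ⟨hQpoly, hbij, hord⟩ := hqp
  have hGmem : G ∈ {X : Set (Fin d → ℝ) | IsFace P X ∧ E ⊆ X} := ⟨hG, hEG⟩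
  have hψGface : IsFace QE (ψE G) := hbij.mapsTo hGmem
  refine ⟨isPolytope_face hQpoly hψGface, ⟨?_, ?_, ?_⟩, ?_⟩
  · rintro K ⟨hKG, hEK⟩
    have hKmem : K ∈ {X : Set (Fin d → ℝ) | IsFace P X ∧ E ⊆ X} :=
      ⟨face_trans hP hG hKG, hEK⟩
    have h1 : ψE K ⊆ ψE G := (hord K hKmem G hGmem).mp (face_subset hKG)
    exact isFace_of_face_subset hψGface (hbij.mapsTo hKmem) h1
  · intro K₁ h₁ K₂ h₂ he
    exact hbij.injOn ⟨face_trans hP hG h₁.1, h₁.2⟩ ⟨face_trans hP hG h₂.1, h₂.2⟩ he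
  · intro H hH
    have hHQE : IsFace QE H := face_trans hQpoly hψGface hH
    obtain ⟨K, hK, hψK⟩ := hbij.surjOn
      (show H ∈ {X : Set (Fin d → ℝ) | IsFace QE X} from hHQE)
    have hKG' : K ⊆ G := (hord K hK G hGmem).mpr (by rw [hψK]; exact face_subset hH)
    exact ⟨K, ⟨isFace_of_face_subset hG hK.1 hKG', hK.2⟩, hψK⟩
  · intro G₁ h₁ G₂ h₂
    exact hord G₁ ⟨face_trans hP hG h₁.1, h₁.2⟩ G₂ ⟨face_trans hP hG h₂.1, h₂.2⟩

lemma quot_quot {P E G' G QE QG' : Set (Fin d → ℝ)}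
    {ψE ψG' : Set (Fin d → ℝ) → Set (Fin d → ℝ)}
    (hP : IsPolytope P) (hG' : IsFace P G') (hG : IsFace P G)
    (hEG' : E ⊆ G') (hG'G : G' ⊆ G)
    (hqpE : IsQuotientPair P E QE ψE) (hqpG' : IsQuotientPair P G' QG' ψG') :
    IsQuotientPair (ψE G) (ψE G') (ψG' G)
      (fun K => ψG' (Function.invFunOn ψE {X : Set (Fin d → ℝ) | IsFace P X ∧ E ⊆ X} K)) := by
  have hres := quot_restrict hP hG hG'G hqpG'
  obtain ⟨hQE, hbijE, hordE⟩ := hqpE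
  set SEs := {X : Set (Fin d → ℝ) | IsFace P X ∧ E ⊆ X} with hSEs
  set Mid := {M : Set (Fin d → ℝ) | IsFace P M ∧ G' ⊆ M ∧ M ⊆ G} with hMid
  set Dom := {K : Set (Fin d → ℝ) | IsFace (ψE G) K ∧ ψE G' ⊆ K} with hDom
  set e := Function.invFunOn ψE SEs with he
  have hEG : E ⊆ G := hEG'.trans hG'G
  have hGmem : G ∈ SEs := ⟨hG, hEG⟩
  have hG'mem : G' ∈ SEs := ⟨hG', hEG'⟩
  have hψGface : IsFace QE (ψE G) := hbijE.mapsTo hGmem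
  have hMidSub : Mid ⊆ SEs := fun M hM => ⟨hM.1, hEG'.trans hM.2.1⟩
  -- Step A : BijOn ψE Mid Dom
  have hA : Set.BijOn ψE Mid Dom := by
    refine ⟨?_, hbijE.injOn.mono hMidSub, ?_⟩
    · rintro M ⟨hM, hG'M, hMG⟩
      have hMmem : M ∈ SEs := ⟨hM, hEG'.trans hG'M⟩
      refine ⟨isFace_of_face_subset hψGface (hbijE.mapsTo hMmem)
        ((hordE M hMmem G hGmem).mp hMG), (hordE G' hG'mem M hMmem).mp hG'M⟩
    · rintro K ⟨hKface, hψG'K⟩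
      have hKQE : IsFace QE K := face_trans hQE hψGface hKface
      obtain ⟨M, hMmem, hψM⟩ := hbijE.surjOn (show K ∈ {X : Set (Fin d → ℝ) | IsFace QE X} from hKQE)
      have hG'M : G' ⊆ M := (hordE G' hG'mem M hMmem).mpr (by rw [hψM]; exact hψG'K)
      have hMG : M ⊆ G := (hordE M hMmem G hGmem).mpr (by rw [hψM]; exact face_subset hKface)
      exact ⟨M, ⟨hMmem.1, hG'M, hMG⟩, hψM⟩
  have heL : ∀ M ∈ SEs, e (ψE M) = M := fun M hM => hbijE.injOn.leftInvOn_invFunOn hM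
  -- Step C : BijOn e Dom Mid
  have hC : Set.BijOn e Dom Mid := by
    refine ⟨?_, ?_, ?_⟩
    · intro K hK
      obtain ⟨M, hM, hψM⟩ := hA.surjOn hK
      rw [← hψM, heL M (hMidSub hM)]
      exact hM
    · intro K₁ h₁ K₂ h₂ hee
      obtain ⟨M₁, hM₁, hψM₁⟩ := hA.surjOn h₁
      obtain ⟨M₂, hM₂, hψM₂⟩ := hA.surjOn h₂
      rw [← hψM₁, ← hψM₂, heL M₁ (hMidSub hM₁), heL M₂ (hMidSub hM₂)] at hee
      rw [← hψM₁, ← hψM₂, hee]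
    · intro M hM
      exact ⟨ψE M, hA.mapsTo hM, heL M (hMidSub hM)⟩
  -- assemble
  have hMidEq : {K : Set (Fin d → ℝ) | IsFace G K ∧ G' ⊆ K} = Mid := by
    ext K
    rw [Set.mem_setOf_eq, Set.mem_setOf_eq, isFace_face_iff hP hG]
    tauto
  have hbijres : Set.BijOn ψG' Mid {K : Set (Fin d → ℝ) | IsFace (ψG' G) K} := by
    rw [← hMidEq]; exact hres.2.1
  refine ⟨hres.1, ?_, ?_⟩
  · exact hbijres.comp hC
  · intro K₁ h₁ K₂ h₂
    obtain ⟨M₁, hM₁, hψM₁⟩ := hA.surjOn h₁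
    obtain ⟨M₂, hM₂, hψM₂⟩ := hA.surjOn h₂
    have e₁ : e K₁ = M₁ := by rw [← hψM₁, heL M₁ (hMidSub hM₁)]
    have e₂ : e K₂ = M₂ := by rw [← hψM₂, heL M₂ (hMidSub hM₂)]
    have horder' := hqpG'.2.2 M₁ ⟨hM₁.1, hM₁.2.1⟩ M₂ ⟨hM₂.1, hM₂.2.1⟩
    constructor
    · intro hsub
      have : M₁ ⊆ M₂ := (hordE M₁ (hMidSub hM₁) M₂ (hMidSub hM₂)).mpr
        (by rw [hψM₁, hψM₂]; exact hsub)
      simp only [e₁, e₂]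
      exact horder'.mp this
    · intro hsub
      simp only [e₁, e₂] at hsub
      have : M₁ ⊆ M₂ := horder'.mpr hsub
      rw [← hψM₁, ← hψM₂]
      exact (hordE M₁ (hMidSub hM₁) M₂ (hMidSub hM₂)).mp this

end RelGAux

namespace RelGAux

variable {d : ℕ}

/-- The interval `[G', G]` in the face poset of `P` maps bijectively onto the
faces of `ψE G` containing `ψE G'`. -/
lemma bijOn_interval {P E G' G QE : Set (Fin d → ℝ)} {ψE : Set (Fin d → ℝ) → Set (Fin d → ℝ)}
    (hP : IsPolytope P) (hG : IsFace P G) (hEG' : E ⊆ G') (hEG : E ⊆ G)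
    (hqpE : IsQuotientPair P E QE ψE) (hG'face : IsFace P G') :
    Set.BijOn ψE {M : Set (Fin d → ℝ) | IsFace P M ∧ G' ⊆ M ∧ M ⊆ G}
      {K : Set (Fin d → ℝ) | IsFace (ψE G) K ∧ ψE G' ⊆ K} := by
  obtain ⟨hQE, hbijE, hordE⟩ := hqpE
  have hGmem : G ∈ {X : Set (Fin d → ℝ) | IsFace P X ∧ E ⊆ X} := ⟨hG, hEG⟩
  have hG'mem : G' ∈ {X : Set (Fin d → ℝ) | IsFace P X ∧ E ⊆ X} := ⟨hG'face, hEG'⟩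
  have hψGface : IsFace QE (ψE G) := hbijE.mapsTo hGmem
  refine ⟨?_, ?_, ?_⟩
  · rintro M ⟨hM, hG'M, hMG⟩
    have hMmem : M ∈ {X : Set (Fin d → ℝ) | IsFace P X ∧ E ⊆ X} := ⟨hM, hEG'.trans hG'M⟩
    exact ⟨isFace_of_face_subset hψGface (hbijE.mapsTo hMmem)
      ((hordE M hMmem G hGmem).mp hMG), (hordE G' hG'mem M hMmem).mp hG'M⟩
  · intro M₁ h₁ M₂ h₂ hee
    exact hbijE.injOn ⟨h₁.1, hEG'.trans h₁.2.1⟩ ⟨h₂.1, hEG'.trans h₂.2.1⟩ hee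
  · rintro K ⟨hKface, hψG'K⟩
    have hKQE : IsFace QE K := face_trans hQE hψGface hKface
    obtain ⟨M, hMmem, hψM⟩ := hbijE.surjOn
      (show K ∈ {X : Set (Fin d → ℝ) | IsFace QE X} from hKQE)
    have hG'M : G' ⊆ M := (hordE G' hG'mem M hMmem).mpr (by rw [hψM]; exact hψG'K)
    have hMG : M ⊆ G := (hordE M hMmem G hGmem).mpr (by rw [hψM]; exact face_subset hKface)
    exact ⟨M, ⟨hMmem.1, hG'M, hMG⟩, hψM⟩

lemma eq_face {g h : Set (Fin d → ℝ) → Polynomial ℤ}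
    {gr : Set (Fin d → ℝ) → Set (Fin d → ℝ) → Polynomial ℤ}
    {P F' : Set (Fin d → ℝ)} {Q : Set (Fin d → ℝ) → Set (Fin d → ℝ)}
    {ψ : Set (Fin d → ℝ) → Set (Fin d → ℝ) → Set (Fin d → ℝ)}
    (hgr : IsRelG g gr) (hP : IsPolytope P)
    (hQ : ∀ E, IsFace P E → F' ⊆ E → IsQuotientPair P E (Q E) (ψ E))
    {G W : Set (Fin d → ℝ)} (hG : IsFace P G) (hW : IsFace P W) (hWG : W ⊆ G)
    (hF'W : F' ⊆ W) :
    ∑ᶠ E ∈ {E : Set (Fin d → ℝ) | IsFace G E ∧ W ⊆ E}, gr E W * g (ψ E G) = g G :=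
  hgr G W (fun E => ψ E G) ψ (isPolytope_face hP hG) (isFace_of_face_subset hG hW hWG)
    (fun E hE hWE => quot_restrict hP hG (face_subset hE)
      (hQ E (face_trans hP hG hE) (hF'W.trans hWE)))

lemma eq_quot {g h : Set (Fin d → ℝ) → Polynomial ℤ}
    {gr : Set (Fin d → ℝ) → Set (Fin d → ℝ) → Polynomial ℤ}
    {P F F' : Set (Fin d → ℝ)} {Q : Set (Fin d → ℝ) → Set (Fin d → ℝ)}
    {ψ : Set (Fin d → ℝ) → Set (Fin d → ℝ) → Set (Fin d → ℝ)}
    (hgr : IsRelG g gr) (hP : IsPolytope P) (hF : IsFace P F)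
    (hQ : ∀ E, IsFace P E → F' ⊆ E → IsQuotientPair P E (Q E) (ψ E))
    {E G : Set (Fin d → ℝ)} (hE : IsFace P E) (hF'E : F' ⊆ E) (hG : IsFace P G)
    (hEG : E ⊆ G) (hFG : F ⊆ G) :
    ∑ᶠ G' ∈ {G' : Set (Fin d → ℝ) | IsFace P G' ∧ polyJoin P E F ⊆ G' ∧ G' ⊆ G},
      gr (ψ E G') (ψ E (polyJoin P E F)) * g (ψ G' G) = g (ψ E G) := by
  classical
  set J := polyJoin P E F with hJdef
  have hJface : IsFace P J := polyJoin_isFace hP (face_subset hE) (face_subset hF)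
  have hEJ : E ⊆ J := subset_polyJoin_left
  have hFJ : F ⊆ J := subset_polyJoin_right
  have hJG : J ⊆ G := polyJoin_subset hG hEG hFG
  have hqpE := hQ E hE hF'E
  obtain ⟨hQE, hbijE, hordE⟩ := hqpE
  set SEs := {X : Set (Fin d → ℝ) | IsFace P X ∧ E ⊆ X} with hSEs
  set e := Function.invFunOn (ψ E) SEs with he
  have heL : ∀ M ∈ SEs, e (ψ E M) = M := fun M hM => hbijE.injOn.leftInvOn_invFunOn hM
  have hGmem : G ∈ SEs := ⟨hG, hEG⟩
  have hJmem : J ∈ SEs := ⟨hJface, hEJ⟩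
  have hψGface : IsFace (Q E) (ψ E G) := hbijE.mapsTo hGmem
  have hψJface : IsFace (Q E) (ψ E J) := hbijE.mapsTo hJmem
  have hp1 : IsPolytope (ψ E G) := isPolytope_face hQE hψGface
  have hp2 : IsFace (ψ E G) (ψ E J) :=
    isFace_of_face_subset hψGface hψJface ((hordE J hJmem G hGmem).mp hJG)
  have hp3 : ∀ K, IsFace (ψ E G) K → ψ E J ⊆ K →
      IsQuotientPair (ψ E G) K (ψ (e K) G) (fun K' => ψ (e K) (e K')) := by
    intro K hK hJK
    have hKQE : IsFace (Q E) K := face_trans hQE hψGface hK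
    obtain ⟨M, hMmem, hψM⟩ := hbijE.surjOn
      (show K ∈ {X : Set (Fin d → ℝ) | IsFace (Q E) X} from hKQE)
    have hJM : J ⊆ M := (hordE J hJmem M hMmem).mpr (by rw [hψM]; exact hJK)
    have hMG : M ⊆ G := (hordE M hMmem G hGmem).mpr (by rw [hψM]; exact face_subset hK)
    have hF'M : F' ⊆ M := hF'E.trans hMmem.2
    have heK : e K = M := by rw [← hψM, heL M hMmem]
    have hq := quot_quot hP hMmem.1 hG hMmem.2 hMG
      ⟨hQE, hbijE, hordE⟩ (hQ M hMmem.1 hF'M)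
    rw [heK, ← hψM]
    exact hq
  have hconc := hgr (ψ E G) (ψ E J) (fun K => ψ (e K) G) (fun K K' => ψ (e K) (e K'))
    hp1 hp2 hp3
  have hbijB : Set.BijOn (ψ E)
      {G' : Set (Fin d → ℝ) | IsFace P G' ∧ J ⊆ G' ∧ G' ⊆ G}
      {K : Set (Fin d → ℝ) | IsFace (ψ E G) K ∧ ψ E J ⊆ K} :=
    bijOn_interval hP hG hEJ hEG ⟨hQE, hbijE, hordE⟩ hJface
  rw [← hconc]
  apply finsum_mem_eq_of_bijOn (ψ E) hbijB
  intro G' hG'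
  have hG'mem : G' ∈ SEs := ⟨hG'.1, hEJ.trans hG'.2.1⟩
  rw [heL G' hG'mem]

end RelGAux

namespace RelGAux

variable {d : ℕ}

lemma main_induction {g h : Set (Fin d → ℝ) → Polynomial ℤ}
    {gr : Set (Fin d → ℝ) → Set (Fin d → ℝ) → Polynomial ℤ}
    {P F F' : Set (Fin d → ℝ)} {Q : Set (Fin d → ℝ) → Set (Fin d → ℝ)}
    {ψ : Set (Fin d → ℝ) → Set (Fin d → ℝ) → Set (Fin d → ℝ)}
    (hGH : IsGH g h) (hgr : IsRelG g gr) (hP : IsPolytope P)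
    (hF : IsFace P F) (hF' : IsFace P F') (hle : F' ⊆ F)
    (hQ : ∀ E, IsFace P E → F' ⊆ E → IsQuotientPair P E (Q E) (ψ E)) :
    ∀ (n : ℕ) (G : Set (Fin d → ℝ)), IsFace P G → F ⊆ G →
      {K : Set (Fin d → ℝ) | IsFace P K ∧ K ⊆ G}.ncard ≤ n →
      gr G F = ∑ᶠ E ∈ {E : Set (Fin d → ℝ) | IsFace P E ∧ F' ⊆ E ∧ E ⊆ G},
        gr E F' * gr (ψ E G) (ψ E (polyJoin P E F)) := by
  classical
  have hfinFaces : {K : Set (Fin d → ℝ) | IsFace P K}.Finite := finite_faces hP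
  -- finiteness of the various index sets
  have hfinBelow : ∀ G : Set (Fin d → ℝ), {K : Set (Fin d → ℝ) | IsFace P K ∧ K ⊆ G}.Finite :=
    fun G => hfinFaces.subset (fun K hK => hK.1)
  have hSA'fin : ∀ G' : Set (Fin d → ℝ),
      {E : Set (Fin d → ℝ) | IsFace P E ∧ F' ⊆ E ∧ E ⊆ G'}.Finite :=
    fun G' => hfinFaces.subset (fun E hE => hE.1)
  intro n
  induction n with
  | zero =>
    intro G hG hFG hcard
    exfalso
    have hne : {K : Set (Fin d → ℝ) | IsFace P K ∧ K ⊆ G}.Nonempty :=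
      ⟨∅, isFace_empty P, Set.empty_subset G⟩
    have := (Set.ncard_pos (hfinBelow G)).mpr hne
    omega
  | succ k IH =>
    intro G hG hFG hcard
    have hF'G : F' ⊆ G := hle.trans hFG
    -- Finsets
    set A' : Set (Fin d → ℝ) → Finset (Set (Fin d → ℝ)) :=
      fun G' => (hSA'fin G').toFinset with hA'def
    have hSBfin : {G' : Set (Fin d → ℝ) | IsFace P G' ∧ F ⊆ G' ∧ G' ⊆ G}.Finite :=
      hfinFaces.subset (fun K hK => hK.1)
    set Bf : Finset (Set (Fin d → ℝ)) := hSBfin.toFinset with hBfdef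
    have hSBEfin : ∀ E : Set (Fin d → ℝ),
        {G' : Set (Fin d → ℝ) | IsFace P G' ∧ polyJoin P E F ⊆ G' ∧ G' ⊆ G}.Finite :=
      fun E => hfinFaces.subset (fun K hK => hK.1)
    set BE : Set (Fin d → ℝ) → Finset (Set (Fin d → ℝ)) :=
      fun E => (hSBEfin E).toFinset with hBEdef
    -- Equation e1
    have e1 : ∑ E ∈ A' G, gr E F' * g (ψ E G) = g G := by
      have h0 := eq_face (h := h) hgr hP hQ hG hF' hF'G subset_rfl
      have hseteq : {E : Set (Fin d → ℝ) | IsFace G E ∧ F' ⊆ E}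
          = {E : Set (Fin d → ℝ) | IsFace P E ∧ F' ⊆ E ∧ E ⊆ G} := by
        ext K
        simp only [Set.mem_setOf_eq, isFace_face_iff hP hG]
        tauto
      rw [hseteq, ← (hSA'fin G).coe_toFinset, finsum_mem_coe_finset] at h0
      exact h0
    -- Equation e2
    have e2 : ∑ G' ∈ Bf, gr G' F * g (ψ G' G) = g G := by
      have h0 := eq_face (h := h) hgr hP hQ hG hF hFG hle
      have hseteq : {E : Set (Fin d → ℝ) | IsFace G E ∧ F ⊆ E}
          = {G' : Set (Fin d → ℝ) | IsFace P G' ∧ F ⊆ G' ∧ G' ⊆ G} := by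
        ext K
        simp only [Set.mem_setOf_eq, isFace_face_iff hP hG]
        tauto
      rw [hseteq, ← hSBfin.coe_toFinset, finsum_mem_coe_finset] at h0
      exact h0
    -- Equation e3
    have e3 : ∀ E : Set (Fin d → ℝ), IsFace P E → F' ⊆ E → E ⊆ G →
        ∑ G' ∈ BE E, gr (ψ E G') (ψ E (polyJoin P E F)) * g (ψ G' G) = g (ψ E G) := by
      intro E hE hF'E hEG
      have h0 := eq_quot (h := h) hgr hP hF hQ hE hF'E hG hEG hFG
      rw [← (hSBEfin E).coe_toFinset, finsum_mem_coe_finset] at h0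
      exact h0
    -- the inductive hypothesis, for proper subfaces
    have hIH : ∀ G' ∈ Bf, G' ≠ G →
        gr G' F = ∑ E ∈ A' G', gr E F' * gr (ψ E G') (ψ E (polyJoin P E F)) := by
      intro G' hG'mem hne
      rw [Set.Finite.mem_toFinset] at hG'mem
      obtain ⟨hG'face, hFG', hG'G⟩ := hG'mem
      have hlt : {K : Set (Fin d → ℝ) | IsFace P K ∧ K ⊆ G'}.ncard
          < {K : Set (Fin d → ℝ) | IsFace P K ∧ K ⊆ G}.ncard := by
        apply Set.ncard_lt_ncard _ (hfinBelow G)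
        constructor
        · exact fun K hK => ⟨hK.1, hK.2.trans hG'G⟩
        · intro hsub
          have hGmem : G ∈ {K : Set (Fin d → ℝ) | IsFace P K ∧ K ⊆ G} := ⟨hG, subset_rfl⟩
          have := (hsub hGmem).2
          exact hne (Set.Subset.antisymm hG'G this)
      have h0 := IH G' hG'face hFG' (by omega)
      rw [h0, ← (hSA'fin G').coe_toFinset, finsum_mem_coe_finset]
    -- the key double-sum computation
    set D : Set (Fin d → ℝ) → Polynomial ℤ :=
      fun G' => ∑ E ∈ A' G', gr E F' * gr (ψ E G') (ψ E (polyJoin P E F)) with hDdef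
    have hT : ∑ G' ∈ Bf, D G' * g (ψ G' G) = g G := by
      have step1 : ∑ G' ∈ Bf, D G' * g (ψ G' G)
          = ∑ G' ∈ Bf, ∑ E ∈ A' G',
              (gr E F' * gr (ψ E G') (ψ E (polyJoin P E F))) * g (ψ G' G) := by
        exact Finset.sum_congr rfl (fun G' _ => Finset.sum_mul _ _ _)
      rw [step1]
      have hswap : ∑ G' ∈ Bf, ∑ E ∈ A' G',
            (gr E F' * gr (ψ E G') (ψ E (polyJoin P E F))) * g (ψ G' G)
          = ∑ E ∈ A' G, ∑ G' ∈ BE E,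
            (gr E F' * gr (ψ E G') (ψ E (polyJoin P E F))) * g (ψ G' G) := by
        apply Finset.sum_comm'
        intro G' E
        simp only [hBfdef, hA'def, hBEdef, Set.Finite.mem_toFinset, Set.mem_setOf_eq]
        constructor
        · rintro ⟨⟨hG'f, hFG', hG'G⟩, hEf, hF'E, hEG'⟩
          exact ⟨⟨hG'f, polyJoin_subset hG'f hEG' hFG', hG'G⟩,
            hEf, hF'E, hEG'.trans hG'G⟩
        · rintro ⟨⟨hG'f, hJG', hG'G⟩, hEf, hF'E, hEG⟩
          exact ⟨⟨hG'f, subset_polyJoin_right.trans hJG', hG'G⟩,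
            hEf, hF'E, subset_polyJoin_left.trans hJG'⟩
      rw [hswap]
      have hinner : ∀ E ∈ A' G, ∑ G' ∈ BE E,
            (gr E F' * gr (ψ E G') (ψ E (polyJoin P E F))) * g (ψ G' G)
          = gr E F' * g (ψ E G) := by
        intro E hEmem
        rw [Set.Finite.mem_toFinset] at hEmem
        obtain ⟨hEf, hF'E, hEG⟩ := hEmem
        simp only [mul_assoc]
        rw [← Finset.mul_sum]
        rw [e3 E hEf hF'E hEG]
      rw [Finset.sum_congr rfl hinner]
      exact e1
    -- subtract
    have hzero : ∑ G' ∈ Bf, (gr G' F - D G') * g (ψ G' G) = 0 := by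
      simp only [sub_mul]
      rw [Finset.sum_sub_distrib, e2, hT, sub_self]
    have hGmemBf : G ∈ Bf := by
      rw [Set.Finite.mem_toFinset]
      exact ⟨hG, hFG, subset_rfl⟩
    have hsingle : ∑ G' ∈ Bf, (gr G' F - D G') * g (ψ G' G)
        = (gr G F - D G) * g (ψ G G) := by
      apply Finset.sum_eq_single_of_mem G hGmemBf
      intro b hb hbne
      rw [hIH b hb hbne,
        show (∑ E ∈ A' b, gr E F' * gr (ψ E b) (ψ E (polyJoin P E F))) = D b from rfl,
        sub_self, zero_mul]
    rw [hsingle] at hzero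
    have hψGG : ψ G G = ∅ := psi_bottom hG (hQ G hG hF'G)
    rw [hψGG, hGH.1, mul_one, sub_eq_zero] at hzero
    rw [hzero, ← (hSA'fin G).coe_toFinset, finsum_mem_coe_finset]

end RelGAux

/-- For any convex polytope `P` and faces `F′ ≤ F` of `P`,
`g(P,F) = ∑_{F′ ≤ E ≤ P} g(E,F′)·g(P/E, (E∨F)/E)`, where `(E∨F)/E` is the face of
the quotient polytope `P/E` corresponding to `E ∨ F` under the isomorphism of its
face poset with the interval `[E,P]`. -/
theorem relative_g_decomposition {d : ℕ} (g h : Set (Fin d → ℝ) → Polynomial ℤ)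
    (gr : Set (Fin d → ℝ) → Set (Fin d → ℝ) → Polynomial ℤ)
    (hGH : IsGH g h) (hgr : IsRelG g gr)
    (P F F' : Set (Fin d → ℝ)) (hP : IsPolytope P)
    (hF : IsFace P F) (hF' : IsFace P F') (hle : F' ⊆ F)
    (Q : Set (Fin d → ℝ) → Set (Fin d → ℝ))
    (ψ : Set (Fin d → ℝ) → Set (Fin d → ℝ) → Set (Fin d → ℝ))
    (hQ : ∀ E, IsFace P E → F' ⊆ E → IsQuotientPair P E (Q E) (ψ E)) :
    gr P F = ∑ᶠ E ∈ {E : Set (Fin d → ℝ) | IsFace P E ∧ F' ⊆ E},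
      gr E F' * gr (Q E) (ψ E (polyJoin P E F)) := by
  have hmain := RelGAux.main_induction hGH hgr hP hF hF' hle hQ
    ({K : Set (Fin d → ℝ) | IsFace P K ∧ K ⊆ P}.ncard) P (RelGAux.isFace_self P)
    (RelGAux.face_subset hF) le_rfl
  rw [hmain]
  apply finsum_mem_congr
  · ext E
    simp only [Set.mem_setOf_eq]
    constructor
    · rintro ⟨h1, h2, _⟩; exact ⟨h1, h2⟩
    · rintro ⟨h1, h2⟩; exact ⟨h1, h2, RelGAux.face_subset h1⟩
  · intro E hE
    rw [RelGAux.psi_top hE.1 (hQ E hE.1 hE.2)]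

end
end
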